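/- arXiv:2004.11631 — 4 statements merged into one kernel-verified Lean document; each statement's English description precedes it below -/
import Mathlib

section
/- Let 1 ≤ p < ∞ and X = ℓ^p, the Banach space of p-summable complex sequences indexed by m ≥ 1. Let R be the group of operators γ on X of the form (γx)_m = e^{2πik_m/m} x_m for arbitrary choices k₂, k₃, … ∈ ℕ ∪ {0} (the first coordinate unchanged). Suppose K ⊆ X satisfies γ(K) ⊆ K for every γ ∈ R and π_{j_n}(K) ⊆ K for some strictly increasing sequence (j_n) of naturals, where π_n is the truncation operator. If z ∈ X \ K can be separated from K by a continuous polynomial Q (sup_{w∈K}|Q(w)| < |Q(z)|), then there exists a continuous polynomial P on X with P ∘ γ = P for every γ ∈ R and sup_{w∈K}|P(w)| < |P(z)|. Furthermore, if Q is homogeneous, then P can be chosen to be homogeneous. -/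
open scoped ENNReal

/-- A continuous polynomial on a complex normed space `X`. -/
def IsContinuousPolynomial {X : Type*} [NormedAddCommGroup X] [NormedSpace ℂ X]
    (P : X → ℂ) : Prop :=
  ∃ (N : ℕ) (a₀ : ℂ)
    (A : (k : Fin N) → ContinuousMultilinearMap ℂ (fun _ : Fin (k.1 + 1) => X) ℂ),
    ∀ x, P x = a₀ + ∑ k, A k (fun _ => x)

/-- An `m`-homogeneous continuous polynomial on a complex normed space `X`. -/
def IsHomogeneousPolynomial {X : Type*} [NormedAddCommGroup X] [NormedSpace ℂ X]
    (m : ℕ) (P : X → ℂ) : Prop :=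
  ∃ A : ContinuousMultilinearMap ℂ (fun _ : Fin m => X) ℂ, ∀ x, P x = A (fun _ => x)

/-- `x'` is obtained from `x` by the action of the element of the group `R` of multipliers by
roots of unity determined by `k = (k_m)`: the coordinate with (1-based) index `m = j + 1` is
multiplied by `e^{2πi k_m / m}`. -/
def rootsOfUnityRel {p : ℝ≥0∞} [Fact (1 ≤ p)] (k : ℕ → ℕ)
    (x x' : lp (fun _ : ℕ => ℂ) p) : Prop :=
  ∀ j : ℕ, x' j = Complex.exp (2 * Real.pi * Complex.I * (k j : ℂ) / ((j : ℂ) + 1)) * x j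

namespace S9

/-! ### The phase function -/

/-- The root-of-unity phase `e^{2πi t/(i+1)}`. -/
noncomputable def ph (i t : ℕ) : ℂ :=
  Complex.exp (2 * Real.pi * Complex.I * (t : ℂ) / ((i : ℂ) + 1))

lemma ph_zero (i : ℕ) : ph i 0 = 1 := by simp [ph]

lemma ph_ne_zero (i t : ℕ) : ph i t ≠ 0 := Complex.exp_ne_zero _

lemma ph_add (i a b : ℕ) : ph i (a + b) = ph i a * ph i b := by
  rw [ph, ph, ph, ← Complex.exp_add]
  congr 1
  push_cast
  ring

lemma ph_pow (i a n : ℕ) : ph i a ^ n = ph i (a * n) := by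
  induction n with
  | zero => simp [ph_zero]
  | succ m ih => rw [pow_succ, ih, ← ph_add, Nat.mul_succ]

lemma ph_mul_base (i a : ℕ) : ph i ((i + 1) * a) = 1 := by
  have h : ((i : ℂ) + 1) ≠ 0 := Nat.cast_add_one_ne_zero i
  have e : 2 * Real.pi * Complex.I * (((i + 1) * a : ℕ) : ℂ) / ((i : ℂ) + 1)
      = (a : ℤ) * (2 * Real.pi * Complex.I) := by
    push_cast
    field_simp
  rw [ph, e, Complex.exp_int_mul_two_pi_mul_I]

lemma ph_mod (i a : ℕ) : ph i a = ph i (a % (i + 1)) := by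
  conv_lhs => rw [← Nat.div_add_mod a (i + 1)]
  rw [ph_add, ph_mul_base, one_mul]

lemma norm_ph (i t : ℕ) : ‖ph i t‖ = 1 := by
  have e : 2 * Real.pi * Complex.I * (t : ℂ) / ((i : ℂ) + 1)
      = ((2 * Real.pi * t / ((i : ℝ) + 1) : ℝ) : ℂ) * Complex.I := by
    push_cast
    ring
  rw [ph, e, Complex.norm_exp_ofReal_mul_I]

lemma ph_inj {i a b : ℕ} (ha : a < i + 1) (hb : b < i + 1) (h : ph i a = ph i b) : a = b := by
  have h0 : ((i : ℂ) + 1) ≠ 0 := Nat.cast_add_one_ne_zero i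
  have hexp : Complex.exp (2 * Real.pi * Complex.I * ((a : ℂ) - b) / ((i : ℂ) + 1)) = 1 := by
    have e : 2 * Real.pi * Complex.I * ((a : ℂ) - b) / ((i : ℂ) + 1)
        = 2 * Real.pi * Complex.I * (a : ℂ) / ((i : ℂ) + 1)
          - 2 * Real.pi * Complex.I * (b : ℂ) / ((i : ℂ) + 1) := by ring
    rw [e, Complex.exp_sub]
    rw [ph, ph] at h
    rw [h, div_self (Complex.exp_ne_zero _)]
  rw [Complex.exp_eq_one_iff] at hexp
  obtain ⟨n, hn⟩ := hexp
  have h2πI : (2 : ℂ) * Real.pi * Complex.I ≠ 0 := by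
    simp [Real.pi_ne_zero, Complex.I_ne_zero]
  have hC : ((a : ℂ) - b) = n * ((i : ℂ) + 1) := by
    field_simp at hn
    apply mul_left_cancel₀ h2πI
    rw [show (2 : ℂ) * Real.pi * Complex.I * ((a : ℂ) - b)
        = 2 * Real.pi * Complex.I * (a : ℂ) - 2 * Real.pi * Complex.I * (b : ℂ) from by ring]
    rw [show (2 : ℂ) * Real.pi * Complex.I * (n * ((i : ℂ) + 1))
        = n * (2 * Real.pi * Complex.I) * ((i : ℂ) + 1) from by ring]
    linear_combination (2 * (Real.pi : ℂ) * Complex.I) * hn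
  have hZ : (a : ℤ) - b = n * ((i : ℤ) + 1) := by exact_mod_cast hC
  have hn0 : n = 0 := by
    rcases lt_trichotomy n 0 with hlt | heq | hgt
    · nlinarith [hZ, (by exact_mod_cast ha : (a : ℤ) < i + 1),
        (by exact_mod_cast hb : (b : ℤ) < i + 1)]
    · exact heq
    · nlinarith [hZ, (by exact_mod_cast ha : (a : ℤ) < i + 1),
        (by exact_mod_cast hb : (b : ℤ) < i + 1)]
  rw [hn0, zero_mul] at hZ
  omega

lemma ph_congr {i a b : ℕ} (h : a % (i + 1) = b % (i + 1)) : ph i a = ph i b := by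
  rw [ph_mod i a, ph_mod i b, h]

lemma ph_dvd {i a : ℕ} (h : (i + 1) ∣ a) : ph i a = 1 := by
  obtain ⟨b, rfl⟩ := h
  exact ph_mul_base i b

/-! ### Basic constructions on `ℓ^p` -/

variable {p : ℝ≥0∞} [Fact (1 ≤ p)]

/-- The `i`-th coordinate functional on `ℓ^p`. -/
noncomputable def coordL (p : ℝ≥0∞) [Fact (1 ≤ p)] (i : ℕ) :
    lp (fun _ : ℕ => ℂ) p →L[ℂ] ℂ :=
  LinearMap.mkContinuous
    { toFun := fun x => x i
      map_add' := fun x y => rfl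
      map_smul' := fun c x => rfl } 1
    (fun x => by
      show ‖(x : ∀ _ : ℕ, ℂ) i‖ ≤ 1 * ‖x‖
      simpa using lp.norm_apply_le_norm
        (by
          have : (1 : ℝ≥0∞) ≤ p := Fact.out
          intro h; rw [h] at this; simp at this) x i)

/-- The continuous multilinear map `v ↦ c * ∏ k, v k (g k)`. -/
noncomputable def monCMM (p : ℝ≥0∞) [Fact (1 ≤ p)] (d : ℕ) (c : ℂ) (g : Fin d → ℕ) :
    ContinuousMultilinearMap ℂ (fun _ : Fin d => lp (fun _ : ℕ => ℂ) p) ℂ :=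
  c • (ContinuousMultilinearMap.mkPiAlgebraFin ℂ d ℂ).compContinuousLinearMap
    (fun k => coordL p (g k))

lemma monCMM_apply (d : ℕ) (c : ℂ) (g : Fin d → ℕ) (v : Fin d → lp (fun _ : ℕ => ℂ) p) :
    monCMM p d c g v = c * ∏ k : Fin d, (v k : ∀ _ : ℕ, ℂ) (g k) := by
  simp [monCMM, coordL, List.prod_ofFn, smul_eq_mul]
  exact Or.inl rfl

/-- `embed p N v` is the element of `ℓ^p` with coordinates `v` below `N` and `0` above. -/
noncomputable def embed (p : ℝ≥0∞) [Fact (1 ≤ p)] (N : ℕ) (v : Fin N → ℂ) :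
    lp (fun _ : ℕ => ℂ) p :=
  ∑ i : Fin N, lp.single p (i : ℕ) (v i)

lemma embed_apply (N : ℕ) (v : Fin N → ℂ) (m : ℕ) :
    (embed p N v : ∀ _ : ℕ, ℂ) m = if h : m < N then v ⟨m, h⟩ else 0 := by
  rw [embed, lp.coeFn_sum, Finset.sum_apply]
  by_cases h : m < N
  · rw [dif_pos h]
    rw [Finset.sum_eq_single (⟨m, h⟩ : Fin N)]
    · simp [lp.single_apply_self]
    · intro b _ hb
      exact lp.single_apply_ne p _ _ (fun hc => hb (by ext; simp [← hc]))
    · simp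
  · rw [dif_neg h]
    apply Finset.sum_eq_zero
    intro b _
    exact lp.single_apply_ne p _ _ (fun hc => h (hc ▸ b.2))

/-- The first `N` coordinates of `x`. -/
def cds (N : ℕ) (x : lp (fun _ : ℕ => ℂ) p) : Fin N → ℂ := fun i => x (i : ℕ)

/-! ### Monomials as continuous multilinear maps -/

lemma exists_g {N : ℕ} (α : Fin N →₀ ℕ) (d : ℕ) (hd : α.degree = d) :
    ∃ g : Fin d → Fin N, ∀ f : Fin N → ℂ, (∏ k : Fin d, f (g k)) = ∏ i : Fin N, f i ^ α i := by
  classical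
  set l : List (Fin N) := α.toMultiset.toList with hl
  have hlen : l.length = d := by
    rw [hl, Multiset.length_toList, Finsupp.card_toMultiset, ← hd, Finsupp.degree]
    rfl
  refine ⟨fun k => l.get (Fin.cast hlen.symm k), fun f => ?_⟩
  have h1 : (∏ k : Fin d, f (l.get (Fin.cast hlen.symm k))) = ∏ k : Fin l.length, f (l.get k) :=
    Fintype.prod_equiv (finCongr hlen.symm) _ _ (fun k => rfl)
  rw [h1]
  have h2 : (∏ k : Fin l.length, f (l.get k)) = (l.map f).prod := by
    rw [← List.prod_ofFn]
    congr 1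
    conv_rhs => rw [← List.ofFn_get l]
    rw [List.map_ofFn]
    rfl
  rw [h2]
  have h3 : (l.map f).prod = ((α.toMultiset).map f).prod := by
    rw [← Multiset.prod_coe, ← Multiset.map_coe, hl, Multiset.coe_toList]
  rw [h3, Finsupp.toMultiset_map, Finsupp.prod_toMultiset, Finsupp.prod_mapDomain_index
    (fun b => pow_zero b) (fun b m₁ m₂ => pow_add b m₁ m₂), Finsupp.prod_pow]

lemma exists_cmm {N d : ℕ} (q : MvPolynomial (Fin N) ℂ) (hq : q.IsHomogeneous d) :
    ∃ A : ContinuousMultilinearMap ℂ (fun _ : Fin d => lp (fun _ : ℕ => ℂ) p) ℂ,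
      ∀ x : lp (fun _ : ℕ => ℂ) p,
        MvPolynomial.eval (fun i : Fin N => (x : ∀ _ : ℕ, ℂ) (i : ℕ)) q = A (fun _ => x) := by
  classical
  have hdeg : ∀ α ∈ q.support, (α : Fin N →₀ ℕ).degree = d := by
    intro α hα
    by_contra h
    exact (MvPolynomial.mem_support_iff.mp hα) (hq.coeff_eq_zero h)
  choose g hg using fun (α : {a // a ∈ q.support}) => exists_g α.1 d (hdeg α.1 α.2)
  refine ⟨∑ α ∈ q.support.attach, monCMM p d (q.coeff α.1) (fun k => ((g α k : Fin N) : ℕ)),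
    fun x => ?_⟩
  rw [MvPolynomial.eval_eq', ContinuousMultilinearMap.sum_apply, ← Finset.sum_attach q.support
    (fun α => q.coeff α * ∏ i : Fin N, (x : ∀ _ : ℕ, ℂ) (i : ℕ) ^ α i)]
  refine Finset.sum_congr rfl (fun α _ => ?_)
  rw [monCMM_apply]
  congr 1
  exact (hg α (fun i : Fin N => (x : ∀ _ : ℕ, ℂ) (i : ℕ))).symm

/-! ### Between `MvPolynomial` evaluations and polynomial predicates -/

lemma isHomPoly_of_rep {N d : ℕ} (q : MvPolynomial (Fin N) ℂ) (hq : q.IsHomogeneous d) :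
    IsHomogeneousPolynomial d
      (fun x : lp (fun _ : ℕ => ℂ) p => MvPolynomial.eval (cds N x) q) := by
  obtain ⟨A, hA⟩ := exists_cmm (p := p) q hq
  exact ⟨A, fun x => hA x⟩

lemma isPoly_of_rep {N : ℕ} (q : MvPolynomial (Fin N) ℂ) :
    IsContinuousPolynomial
      (fun x : lp (fun _ : ℕ => ℂ) p => MvPolynomial.eval (cds N x) q) := by
  classical
  set D := q.totalDegree with hD
  choose A hA using fun k : Fin D =>
    exists_cmm (p := p) (MvPolynomial.homogeneousComponent (k.1 + 1) q)
      (MvPolynomial.homogeneousComponent_isHomogeneous (k.1 + 1) q)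
  refine ⟨D, MvPolynomial.coeff 0 q, A, fun x => ?_⟩
  show MvPolynomial.eval (cds N x) q = _
  conv_lhs => rw [← MvPolynomial.sum_homogeneousComponent q]
  rw [map_sum, Finset.sum_range_succ']
  have h0 : MvPolynomial.eval (cds N x) (MvPolynomial.homogeneousComponent 0 q)
      = MvPolynomial.coeff 0 q := by
    rw [MvPolynomial.homogeneousComponent_zero, MvPolynomial.eval_C]
  rw [h0, add_comm]
  congr 1
  rw [← Fin.sum_univ_eq_sum_range (fun i => MvPolynomial.eval (cds N x)
    (MvPolynomial.homogeneousComponent (i + 1) q)) D]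
  exact Finset.sum_congr rfl fun k _ => hA k x

lemma cmm_embed_rep {d N : ℕ}
    (A : ContinuousMultilinearMap ℂ (fun _ : Fin d => lp (fun _ : ℕ => ℂ) p) ℂ) :
    ∃ r : MvPolynomial (Fin N) ℂ, r.IsHomogeneous d ∧
      ∀ v : Fin N → ℂ, MvPolynomial.eval v r = A (fun _ => embed p N v) := by
  classical
  refine ⟨∑ f : Fin d → Fin N, MvPolynomial.C (A fun i => lp.single p ((f i : ℕ)) 1) *
      ∏ i : Fin d, MvPolynomial.X (f i), ?_, ?_⟩
  · refine MvPolynomial.IsHomogeneous.sum _ _ _ fun f _ => ?_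
    have h1 := (MvPolynomial.isHomogeneous_C (Fin N) (A fun i => lp.single p ((f i : ℕ)) 1)).mul
      (MvPolynomial.IsHomogeneous.prod Finset.univ (fun i => MvPolynomial.X (f i)) (fun _ => 1)
        (fun i _ => MvPolynomial.isHomogeneous_X _ _))
    simpa using h1
  · intro v
    have hms : (A fun _ : Fin d => embed p N v)
        = ∑ f : Fin d → Fin N, A fun i => lp.single p ((f i : ℕ)) (v (f i)) := by
      have h := A.toMultilinearMap.map_sum (α := fun _ : Fin d => Fin N)
        (g := fun (_ : Fin d) (j : Fin N) => lp.single p ((j : ℕ)) (v j))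
      exact h
    rw [hms, map_sum]
    refine Finset.sum_congr rfl fun f _ => ?_
    rw [map_mul, MvPolynomial.eval_C, map_prod]
    simp_rw [MvPolynomial.eval_X]
    have hsingle : ∀ i : Fin d, (lp.single p ((f i : ℕ)) (v (f i)) : lp (fun _ : ℕ => ℂ) p)
        = v (f i) • (lp.single p ((f i : ℕ)) (1 : ℂ) : lp (fun _ : ℕ => ℂ) p) := by
      intro i
      have h := lp.single_smul (E := fun _ : ℕ => ℂ) (𝕜 := ℂ) p ((f i : ℕ)) (v (f i)) (1 : ℂ)
      rw [smul_eq_mul, mul_one] at h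
      exact h
    have h2 : (A fun i => v (f i) • (lp.single p ((f i : ℕ)) (1 : ℂ) : lp (fun _ : ℕ => ℂ) p))
        = (∏ i, v (f i)) • A fun i => lp.single p ((f i : ℕ)) (1 : ℂ) :=
      A.toMultilinearMap.map_smul_univ (fun i => v (f i))
        (fun i => lp.single p ((f i : ℕ)) (1 : ℂ))
    have h3 : (A fun i => lp.single p ((f i : ℕ)) (v (f i)))
        = (∏ i, v (f i)) • A fun i => lp.single p ((f i : ℕ)) (1 : ℂ) := by
      rw [← h2]
      congr 1
      funext i
      exact hsingle i
    rw [h3, smul_eq_mul, mul_comm]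

lemma rep_hom {m : ℕ} {Q : lp (fun _ : ℕ => ℂ) p → ℂ} (hQ : IsHomogeneousPolynomial m Q)
    (N : ℕ) : ∃ r : MvPolynomial (Fin N) ℂ, r.IsHomogeneous m ∧
      ∀ v, MvPolynomial.eval v r = Q (embed p N v) := by
  obtain ⟨A, hA⟩ := hQ
  obtain ⟨r, hr1, hr2⟩ := cmm_embed_rep (N := N) A
  exact ⟨r, hr1, fun v => by rw [hr2 v, hA]⟩

lemma rep_poly {Q : lp (fun _ : ℕ => ℂ) p → ℂ} (hQ : IsContinuousPolynomial Q) (N : ℕ) :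
    ∃ r : MvPolynomial (Fin N) ℂ, ∀ v, MvPolynomial.eval v r = Q (embed p N v) := by
  obtain ⟨M, a₀, A, hA⟩ := hQ
  choose r hr using fun k : Fin M => cmm_embed_rep (N := N) (A k)
  refine ⟨MvPolynomial.C a₀ + ∑ k, r k, fun v => ?_⟩
  rw [map_add, MvPolynomial.eval_C, map_sum, hA]
  congr 1
  exact Finset.sum_congr rfl fun k _ => (hr k).2 v

lemma continuous_of_isCP {Q : lp (fun _ : ℕ => ℂ) p → ℂ} (hQ : IsContinuousPolynomial Q) :
    Continuous Q := by
  obtain ⟨M, a₀, A, hA⟩ := hQ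
  have hQeq : Q = fun x => a₀ + ∑ k, A k (fun _ => x) := funext hA
  rw [hQeq]
  refine continuous_const.add (continuous_finset_sum _ fun k _ => ?_)
  exact (A k).cont.comp (continuous_pi fun _ => continuous_id)

lemma tendsto_embed (hp : p ≠ ∞) (z : lp (fun _ : ℕ => ℂ) p) :
    Filter.Tendsto (fun N => embed p N (cds N z)) Filter.atTop (nhds z) := by
  have h := (lp.hasSum_single hp z).tendsto_sum_nat
  have he : ∀ N, embed p N (cds N z) = ∑ i ∈ Finset.range N, lp.single p i (z i) := by
    intro N
    rw [embed]
    exact Fin.sum_univ_eq_sum_range (fun i => lp.single p i (z i)) N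
  simpa only [he] using h

/-! ### The finite group of phases and Fourier analysis -/

variable {N : ℕ}

/-- The finite set of admissible phase/class vectors. -/
def TT (N : ℕ) : Finset (Fin N → ℕ) :=
  Fintype.piFinset fun i : Fin N => Finset.range ((i : ℕ) + 1)

lemma mem_TT {t : Fin N → ℕ} : t ∈ TT N ↔ ∀ i, t i < (i : ℕ) + 1 := by
  simp [TT, Fintype.mem_piFinset]

/-- Cardinality of `TT N`. -/
def Tcard (N : ℕ) : ℕ := (TT N).card

lemma Tcard_eq : Tcard N = ∏ i : Fin N, ((i : ℕ) + 1) := by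
  simp [Tcard, TT, Fintype.card_piFinset]

lemma Tcard_pos : 0 < Tcard N := by
  rw [Tcard_eq]
  exact Finset.prod_pos fun i _ => Nat.succ_pos _

lemma Tcard_cast : ((Tcard N : ℂ)) = ∏ i : Fin N, (((i : ℕ) : ℂ) + 1) := by
  rw [Tcard_eq]
  push_cast
  rfl

/-- Character value. -/
noncomputable def chr (κ t : Fin N → ℕ) : ℂ := ∏ i : Fin N, ph (i : ℕ) (t i * κ i)

lemma norm_chr (κ t : Fin N → ℕ) : ‖chr κ t‖ = 1 := by
  rw [chr]
  rw [norm_prod]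
  exact Finset.prod_eq_one fun i _ => norm_ph _ _

/-- Residue class of a multi-index. -/
def cls (α : Fin N →₀ ℕ) : Fin N → ℕ := fun i => α i % ((i : ℕ) + 1)

lemma cls_mem (α : Fin N →₀ ℕ) : cls α ∈ TT N :=
  mem_TT.mpr fun i => Nat.mod_lt _ (Nat.succ_pos _)

/-- Scaling of coordinates by phases. -/
noncomputable def scl (t : Fin N → ℕ) (v : Fin N → ℂ) : Fin N → ℂ :=
  fun i => ph (i : ℕ) (t i) * v i

/-- The part of `q` in residue class `κ`. -/
noncomputable def gpart (q : MvPolynomial (Fin N) ℂ) (κ : Fin N → ℕ) :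
    MvPolynomial (Fin N) ℂ :=
  ∑ α ∈ q.support.filter (fun α => cls α = κ),
    MvPolynomial.monomial α (MvPolynomial.coeff α q)

lemma sum_gpart (q : MvPolynomial (Fin N) ℂ) : ∑ κ ∈ TT N, gpart q κ = q := by
  classical
  rw [show (∑ κ ∈ TT N, gpart q κ)
      = ∑ κ ∈ TT N, ∑ α ∈ q.support.filter (fun α => cls α = κ),
          MvPolynomial.monomial α (MvPolynomial.coeff α q) from rfl]
  rw [Finset.sum_fiberwise_of_maps_to (fun α _ => cls_mem α)]
  exact MvPolynomial.support_sum_monomial_coeff q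

lemma eval_monomial_univ (α : Fin N →₀ ℕ) (c : ℂ) (v : Fin N → ℂ) :
    MvPolynomial.eval v (MvPolynomial.monomial α c) = c * ∏ i : Fin N, v i ^ α i := by
  rw [MvPolynomial.eval_monomial, Finsupp.prod_pow]

lemma eval_scl_monomial (t : Fin N → ℕ) (α : Fin N →₀ ℕ) (c : ℂ) (v : Fin N → ℂ) :
    MvPolynomial.eval (scl t v) (MvPolynomial.monomial α c)
      = (∏ i : Fin N, ph (i : ℕ) (t i * α i)) *
        MvPolynomial.eval v (MvPolynomial.monomial α c) := by
  rw [eval_monomial_univ, eval_monomial_univ]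
  rw [show (∏ i : Fin N, scl t v i ^ α i)
      = ∏ i : Fin N, (ph (i : ℕ) (t i) ^ α i * v i ^ α i) from
    Finset.prod_congr rfl fun i _ => mul_pow _ _ _]
  rw [Finset.prod_mul_distrib]
  have h : ∀ i : Fin N, ph (i : ℕ) (t i) ^ α i = ph (i : ℕ) (t i * α i) := fun i => ph_pow _ _ _
  rw [Finset.prod_congr rfl fun i _ => h i]
  ring

lemma phase_eq_of_cls (t : Fin N → ℕ) (α : Fin N →₀ ℕ) {κ : Fin N → ℕ} (h : cls α = κ) :
    (∏ i : Fin N, ph (i : ℕ) (t i * α i)) = chr κ t := by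
  rw [chr]
  refine Finset.prod_congr rfl fun i _ => ph_congr ?_
  have hi : α i % ((i : ℕ) + 1) = κ i := by rw [← h]; rfl
  calc t i * α i % ((i : ℕ) + 1) = t i * (α i % ((i : ℕ) + 1)) % ((i : ℕ) + 1) :=
        (Nat.ModEq.mul_left (t i) (Nat.mod_modEq (α i) ((i : ℕ) + 1))).symm
    _ = t i * κ i % ((i : ℕ) + 1) := by rw [hi]

lemma eval_scl_gpart (q : MvPolynomial (Fin N) ℂ) (κ t : Fin N → ℕ) (v : Fin N → ℂ) :
    MvPolynomial.eval (scl t v) (gpart q κ) = chr κ t * MvPolynomial.eval v (gpart q κ) := by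
  classical
  rw [gpart, map_sum, map_sum, Finset.mul_sum]
  refine Finset.sum_congr rfl fun α hα => ?_
  rw [eval_scl_monomial, phase_eq_of_cls t α (Finset.mem_filter.mp hα).2]

lemma chr_pow_eq_one {κ t : Fin N → ℕ} (L : ℕ) (hL : ∀ i : Fin N, ((i : ℕ) + 1) ∣ L) :
    chr κ t ^ L = 1 := by
  rw [chr, ← Finset.prod_pow]
  refine Finset.prod_eq_one fun i _ => ?_
  rw [ph_pow]
  exact ph_dvd (Dvd.dvd.mul_left (hL i) _)

/-- Orthogonality / Fourier inversion. -/
lemma ortho (q : MvPolynomial (Fin N) ℂ) {κ : Fin N → ℕ} (hκ : κ ∈ TT N) (v : Fin N → ℂ) :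
    ∑ t ∈ TT N, (chr κ t)⁻¹ * MvPolynomial.eval (scl t v) q
      = (Tcard N : ℂ) * MvPolynomial.eval v (gpart q κ) := by
  classical
  have hq : ∀ t : Fin N → ℕ, MvPolynomial.eval (scl t v) q
      = ∑ α ∈ q.support, (∏ i : Fin N, ph (i : ℕ) (t i * α i)) *
          MvPolynomial.eval v (MvPolynomial.monomial α (MvPolynomial.coeff α q)) := by
    intro t
    conv_lhs => rw [MvPolynomial.as_sum q]
    rw [map_sum]
    exact Finset.sum_congr rfl fun α _ => eval_scl_monomial t α _ v
  calc ∑ t ∈ TT N, (chr κ t)⁻¹ * MvPolynomial.eval (scl t v) q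
      = ∑ t ∈ TT N, ∑ α ∈ q.support, ((chr κ t)⁻¹ * ∏ i : Fin N, ph (i : ℕ) (t i * α i)) *
          MvPolynomial.eval v (MvPolynomial.monomial α (MvPolynomial.coeff α q)) := by
        refine Finset.sum_congr rfl fun t _ => ?_
        rw [hq t, Finset.mul_sum]
        exact Finset.sum_congr rfl fun α _ => by ring
    _ = ∑ α ∈ q.support, (∑ t ∈ TT N, (chr κ t)⁻¹ * ∏ i : Fin N, ph (i : ℕ) (t i * α i)) *
          MvPolynomial.eval v (MvPolynomial.monomial α (MvPolynomial.coeff α q)) := by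
        rw [Finset.sum_comm]
        exact Finset.sum_congr rfl fun α _ => by rw [Finset.sum_mul]
    _ = ∑ α ∈ q.support, (if cls α = κ then (Tcard N : ℂ) else 0) *
          MvPolynomial.eval v (MvPolynomial.monomial α (MvPolynomial.coeff α q)) := by
        refine Finset.sum_congr rfl fun α _ => ?_
        congr 1
        have hterm : ∀ t : Fin N → ℕ, (chr κ t)⁻¹ * ∏ i : Fin N, ph (i : ℕ) (t i * α i)
            = ∏ i : Fin N, (((ph (i : ℕ) (κ i))⁻¹ * ph (i : ℕ) (α i)) ^ t i) := by
          intro t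
          rw [chr, ← Finset.prod_inv_distrib, ← Finset.prod_mul_distrib]
          refine Finset.prod_congr rfl fun i _ => ?_
          rw [mul_pow, inv_pow, ph_pow, ph_pow, mul_comm (κ i) (t i), mul_comm (α i) (t i)]
        rw [Finset.sum_congr rfl fun t _ => hterm t]
        rw [TT, ← Finset.prod_univ_sum]
        by_cases hc : cls α = κ
        · rw [if_pos hc, Tcard_cast]
          refine Finset.prod_congr rfl fun i _ => ?_
          have hζ : (ph (i : ℕ) (κ i))⁻¹ * ph (i : ℕ) (α i) = 1 := by
            have he : ph (i : ℕ) (α i) = ph (i : ℕ) (κ i) := by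
              refine ph_congr ?_
              have hi : α i % ((i : ℕ) + 1) = κ i := by rw [← hc]; rfl
              rw [hi]
              exact (Nat.mod_eq_of_lt (mem_TT.mp hκ i)).symm
            rw [he, inv_mul_cancel₀ (ph_ne_zero _ _)]
          rw [show (∑ s ∈ Finset.range ((i : ℕ) + 1),
              ((ph (i : ℕ) (κ i))⁻¹ * ph (i : ℕ) (α i)) ^ s)
              = ∑ s ∈ Finset.range ((i : ℕ) + 1), 1 from
            Finset.sum_congr rfl fun s _ => by rw [hζ, one_pow]]
          simp
        · rw [if_neg hc]
          obtain ⟨i, hi⟩ : ∃ i : Fin N, ¬ (α i % ((i : ℕ) + 1) = κ i) := by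
            by_contra hall
            push_neg at hall
            exact hc (funext fun i => hall i)
          refine Finset.prod_eq_zero (Finset.mem_univ i) ?_
          set ζ := (ph (i : ℕ) (κ i))⁻¹ * ph (i : ℕ) (α i) with hζdef
          have hζ1 : ζ ≠ 1 := by
            intro h1
            apply hi
            have he : ph (i : ℕ) (α i) = ph (i : ℕ) (κ i) := by
              field_simp [hζdef, ph_ne_zero] at h1
              rw [hζdef, inv_mul_eq_one₀ (ph_ne_zero _ _)] at h1
              exact h1.symm
            have h2 : ph (i : ℕ) (α i % ((i : ℕ) + 1)) = ph (i : ℕ) (κ i) := by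
              rw [← ph_mod]; exact he
            exact ph_inj (Nat.mod_lt _ (Nat.succ_pos _)) (mem_TT.mp hκ i) h2
          have hζpow : ζ ^ ((i : ℕ) + 1) = 1 := by
            rw [hζdef, mul_pow, inv_pow, ph_pow, ph_pow]
            rw [ph_dvd ⟨κ i, mul_comm _ _⟩, ph_dvd ⟨α i, mul_comm _ _⟩]
            simp
          have hgeom := geom_sum_mul ζ ((i : ℕ) + 1)
          rw [hζpow, sub_self] at hgeom
          rcases mul_eq_zero.mp hgeom with h | h
          · exact h
          · exact absurd (sub_eq_zero.mp h) hζ1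
    _ = (Tcard N : ℂ) * MvPolynomial.eval v (gpart q κ) := by
        rw [gpart, map_sum, Finset.mul_sum, Finset.sum_filter]
        refine Finset.sum_congr rfl fun α _ => ?_
        by_cases hc : cls α = κ <;> simp [hc]

/-! ### Rotated elements of `ℓ^p` -/

lemma memRot (k : ℕ → ℕ) (x : lp (fun _ : ℕ => ℂ) p) :
    Memℓp (fun i => ph i (k i) * (x : ∀ _ : ℕ, ℂ) i) p := by
  have hnorm : ∀ i, ‖ph i (k i) * (x : ∀ _ : ℕ, ℂ) i‖ = ‖(x : ∀ _ : ℕ, ℂ) i‖ := fun i => by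
    rw [norm_mul, norm_ph, one_mul]
  rcases p.trichotomy with hp0 | hpi | hpt
  · have h1 : (1 : ℝ≥0∞) ≤ p := Fact.out
    rw [hp0] at h1
    simp at h1
  · subst hpi
    apply memℓp_infty
    have hb := (lp.memℓp x).bddAbove
    have he : (fun i => ‖ph i (k i) * (x : ∀ _ : ℕ, ℂ) i‖)
        = fun i => ‖(x : ∀ _ : ℕ, ℂ) i‖ := funext hnorm
    rw [he]
    exact hb
  · apply memℓp_gen
    have hs := (lp.memℓp x).summable hpt
    have he : (fun i => ‖ph i (k i) * (x : ∀ _ : ℕ, ℂ) i‖ ^ p.toReal)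
        = fun i => ‖(x : ∀ _ : ℕ, ℂ) i‖ ^ p.toReal := funext fun i => by rw [hnorm]
    rw [he]
    exact hs

/-- The element of `ℓ^p` obtained by rotating the coordinates of `x` by phases `k`. -/
noncomputable def rotEl (k : ℕ → ℕ) (x : lp (fun _ : ℕ => ℂ) p) : lp (fun _ : ℕ => ℂ) p :=
  ⟨fun i => ph i (k i) * (x : ∀ _ : ℕ, ℂ) i, memRot k x⟩

lemma rotEl_apply (k : ℕ → ℕ) (x : lp (fun _ : ℕ => ℂ) p) (i : ℕ) :
    (rotEl k x : ∀ _ : ℕ, ℂ) i = ph i (k i) * (x : ∀ _ : ℕ, ℂ) i := rfl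

/-! ### The key lemma -/

lemma key {K : Set (lp (fun _ : ℕ => ℂ) p)}
    {Q : lp (fun _ : ℕ => ℂ) p → ℂ} {z : lp (fun _ : ℕ => ℂ) p} {c : ℝ} {N : ℕ}
    (hc0 : 0 ≤ c)
    (hcK : ∀ w ∈ K, ‖Q w‖ ≤ c)
    (hb : c < ‖Q (embed p N (cds N z))‖)
    (r : MvPolynomial (Fin N) ℂ) (hr : ∀ v, MvPolynomial.eval v r = Q (embed p N v))
    (hKmem : ∀ w ∈ K, ∀ t : Fin N → ℕ, embed p N (scl t (cds N w)) ∈ K) :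
    ∃ g : MvPolynomial (Fin N) ℂ,
      (∀ (t : Fin N → ℕ) (v : Fin N → ℂ),
        MvPolynomial.eval (scl t v) g = MvPolynomial.eval v g) ∧
      (∃ c', c' < ‖MvPolynomial.eval (cds N z) g‖ ∧
        ∀ w ∈ K, ‖MvPolynomial.eval (cds N w) g‖ ≤ c') ∧
      (∀ d, r.IsHomogeneous d → ∃ d', g.IsHomogeneous d') := by
  classical
  set b := ‖Q (embed p N (cds N z))‖ with hbdef
  have hb0 : 0 < b := lt_of_le_of_lt hc0 hb
  have hTc : (0 : ℝ) < (Tcard N : ℝ) := by exact_mod_cast Tcard_pos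
  obtain ⟨s, hs⟩ : ∃ s : ℕ, (Tcard N : ℝ) * c ^ s < b ^ s := by
    rcases eq_or_lt_of_le hc0 with hc | hc
    · exact ⟨1, by rw [← hc]; simpa using hb0⟩
    · have hdiv : 1 < b / c := (one_lt_div hc).mpr hb
      obtain ⟨s, hs⟩ := pow_unbounded_of_one_lt (Tcard N : ℝ) hdiv
      rw [div_pow] at hs
      exact ⟨s, (lt_div_iff₀ (pow_pos hc s)).mp hs⟩
  set q := r ^ s with hqdef
  have hqeval : ∀ v, MvPolynomial.eval v q = (Q (embed p N v)) ^ s := fun v => by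
    rw [hqdef, map_pow, hr]
  have hgbound : ∀ κ ∈ TT N, ∀ w ∈ K, ‖MvPolynomial.eval (cds N w) (gpart q κ)‖ ≤ c ^ s := by
    intro κ hκ w hw
    have hortho := ortho q hκ (cds N w)
    have hnorm : (Tcard N : ℝ) * ‖MvPolynomial.eval (cds N w) (gpart q κ)‖
        = ‖∑ t ∈ TT N, (chr κ t)⁻¹ * MvPolynomial.eval (scl t (cds N w)) q‖ := by
      rw [hortho, norm_mul, Complex.norm_natCast]
    have hsumle : ‖∑ t ∈ TT N, (chr κ t)⁻¹ * MvPolynomial.eval (scl t (cds N w)) q‖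
        ≤ (Tcard N : ℝ) * c ^ s := by
      refine le_trans (norm_sum_le _ _) ?_
      have hterm : ∀ t ∈ TT N,
          ‖(chr κ t)⁻¹ * MvPolynomial.eval (scl t (cds N w)) q‖ ≤ c ^ s := by
        intro t _
        rw [norm_mul, norm_inv, norm_chr, inv_one, one_mul, hqeval, norm_pow]
        exact pow_le_pow_left₀ (norm_nonneg _) (hcK _ (hKmem w hw t)) s
      refine le_trans (Finset.sum_le_sum hterm) ?_
      rw [Finset.sum_const, nsmul_eq_mul]
      rfl
    have hfin := hnorm ▸ hsumle
    exact le_of_mul_le_mul_left hfin hTc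
  have hsumz : MvPolynomial.eval (cds N z) q
      = ∑ κ ∈ TT N, MvPolynomial.eval (cds N z) (gpart q κ) := by
    conv_lhs => rw [← sum_gpart q]
    rw [map_sum]
  have hbig : ∃ κ ∈ TT N, b ^ s / (Tcard N : ℝ)
      ≤ ‖MvPolynomial.eval (cds N z) (gpart q κ)‖ := by
    by_contra hcon
    push_neg at hcon
    have hTne : (TT N).Nonempty := Finset.card_pos.mp Tcard_pos
    have hlt : ‖MvPolynomial.eval (cds N z) q‖ < (Tcard N : ℝ) * (b ^ s / (Tcard N : ℝ)) := by
      calc ‖MvPolynomial.eval (cds N z) q‖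
          ≤ ∑ κ ∈ TT N, ‖MvPolynomial.eval (cds N z) (gpart q κ)‖ := by
            rw [hsumz]; exact norm_sum_le _ _
        _ < ∑ _κ ∈ TT N, b ^ s / (Tcard N : ℝ) :=
            Finset.sum_lt_sum_of_nonempty hTne fun κ hκ => hcon κ hκ
        _ = (Tcard N : ℝ) * (b ^ s / (Tcard N : ℝ)) := by
            rw [Finset.sum_const, nsmul_eq_mul]; rfl
    rw [hqeval, norm_pow, ← hbdef, mul_div_cancel₀ _ hTc.ne'] at hlt
    exact lt_irrefl _ hlt
  obtain ⟨κ0, hκ0, hκ0big⟩ := hbig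
  have hLdvd : ∀ i : Fin N, ((i : ℕ) + 1) ∣ Tcard N := by
    intro i
    rw [Tcard_eq]
    exact Finset.dvd_prod_of_mem _ (Finset.mem_univ i)
  refine ⟨(gpart q κ0) ^ (Tcard N), ?_, ?_, ?_⟩
  · intro t v
    rw [map_pow, map_pow, eval_scl_gpart, mul_pow, chr_pow_eq_one (Tcard N) hLdvd, one_mul]
  · refine ⟨(c ^ s) ^ (Tcard N), ?_, ?_⟩
    · rw [map_pow, norm_pow]
      have h1 : c ^ s < b ^ s / (Tcard N : ℝ) := by
        rw [lt_div_iff₀ hTc, mul_comm]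
        exact hs
      calc (c ^ s) ^ Tcard N
          < (b ^ s / (Tcard N : ℝ)) ^ Tcard N :=
            pow_lt_pow_left₀ h1 (pow_nonneg hc0 s) Tcard_pos.ne'
        _ ≤ ‖MvPolynomial.eval (cds N z) (gpart q κ0)‖ ^ Tcard N :=
            pow_le_pow_left₀ (div_nonneg (pow_nonneg hb0.le s) hTc.le) hκ0big _
    · intro w hw
      rw [map_pow, norm_pow]
      exact pow_le_pow_left₀ (norm_nonneg _) (hgbound κ0 hκ0 w hw) _
  · intro d hd
    refine ⟨d * s * Tcard N, ?_⟩
    have hqh : q.IsHomogeneous (d * s) := hd.pow s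
    have hgh : (gpart q κ0).IsHomogeneous (d * s) := by
      refine MvPolynomial.IsHomogeneous.sum _ _ _ fun α hα => ?_
      refine MvPolynomial.isHomogeneous_monomial _ ?_
      have hαs : α ∈ q.support := (Finset.mem_filter.mp hα).1
      by_contra h
      exact (MvPolynomial.mem_support_iff.mp hαs) (hqh.coeff_eq_zero h)
    exact hgh.pow _

end S9

/-- Let `X = ℓ^p` (`1 ≤ p < ∞`, complex) and let `R` be the group of
diagonal operators multiplying the `m`-th coordinate by an `m`-th root of unity. If `K` is
`R`-invariant with `π_{j_n}(K) ⊆ K` for some strictly increasing `(j_n)`, and `z ∉ K` is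
separated from `K` by a continuous polynomial `Q`, then some `R`-invariant continuous
polynomial `P` separates `z` from `K`; if `Q` is homogeneous, `P` can be chosen homogeneous. -/
theorem statement9 (p : ℝ≥0∞) [Fact (1 ≤ p)] (hp : p ≠ ∞)
    (K : Set (lp (fun _ : ℕ => ℂ) p))
    (hKinv : ∀ (k : ℕ → ℕ) (x x' : lp (fun _ : ℕ => ℂ) p),
      x ∈ K → rootsOfUnityRel k x x' → x' ∈ K)
    (j : ℕ → ℕ) (hjmono : StrictMono j)
    (hKtrunc : ∀ (n : ℕ) (x x' : lp (fun _ : ℕ => ℂ) p), x ∈ K →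
      (∀ i : ℕ, x' i = if i < j n then x i else 0) → x' ∈ K)
    (z : lp (fun _ : ℕ => ℂ) p) (hz : z ∉ K)
    (Q : lp (fun _ : ℕ => ℂ) p → ℂ) (hQ : IsContinuousPolynomial Q)
    (hsep : ∃ c, c < ‖Q z‖ ∧ ∀ w ∈ K, ‖Q w‖ ≤ c) :
    (∃ P : lp (fun _ : ℕ => ℂ) p → ℂ, IsContinuousPolynomial P ∧
      (∀ (k : ℕ → ℕ) (x x' : lp (fun _ : ℕ => ℂ) p), rootsOfUnityRel k x x' → P x' = P x) ∧
      ∃ c, c < ‖P z‖ ∧ ∀ w ∈ K, ‖P w‖ ≤ c) ∧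
    ∀ m : ℕ, IsHomogeneousPolynomial m Q →
      ∃ (m' : ℕ) (P : lp (fun _ : ℕ => ℂ) p → ℂ), IsHomogeneousPolynomial m' P ∧
        (∀ (k : ℕ → ℕ) (x x' : lp (fun _ : ℕ => ℂ) p), rootsOfUnityRel k x x' → P x' = P x) ∧
        ∃ c, c < ‖P z‖ ∧ ∀ w ∈ K, ‖P w‖ ≤ c := by
  classical
  obtain ⟨c, hcz, hcK⟩ := hsep
  by_cases hKe : K = ∅
  · subst hKe
    constructor
    · refine ⟨fun _ => 1, ⟨0, 1, fun k => k.elim0, fun x => by simp⟩, fun k x x' _ => rfl,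
        0, by norm_num, fun w hw => absurd hw (Set.notMem_empty w)⟩
    · intro m _
      refine ⟨0, fun _ => 1,
        ⟨ContinuousMultilinearMap.constOfIsEmpty ℂ _ 1, fun x => by simp⟩,
        fun k x x' _ => rfl, 0, by norm_num, fun w hw => absurd hw (Set.notMem_empty w)⟩
  · obtain ⟨w₀, hw₀⟩ := Set.nonempty_iff_ne_empty.mpr hKe
    have hc0 : 0 ≤ c := le_trans (norm_nonneg _) (hcK w₀ hw₀)
    have hQc : Continuous Q := S9.continuous_of_isCP hQ
    have ht : Filter.Tendsto (fun n => S9.embed p (j n) (S9.cds (j n) z))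
        Filter.atTop (nhds z) :=
      (S9.tendsto_embed hp z).comp hjmono.tendsto_atTop
    have hev : ∀ᶠ n in Filter.atTop, c < ‖Q (S9.embed p (j n) (S9.cds (j n) z))‖ :=
      (((hQc.tendsto z).comp ht).norm).eventually (eventually_gt_nhds hcz)
    obtain ⟨n, hn⟩ := hev.exists
    set N := j n with hN
    have hKmem : ∀ w ∈ K, ∀ t : Fin N → ℕ, S9.embed p N (S9.scl t (S9.cds N w)) ∈ K := by
      intro w hw t
      have h1 : S9.embed p N (S9.cds N w) ∈ K := by
        refine hKtrunc n w _ hw ?_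
        intro i
        rw [S9.embed_apply]
        split_ifs with h
        · rfl
        · rfl
      set kk : ℕ → ℕ := fun i => if h : i < N then t ⟨i, h⟩ else 0 with hkk
      have h2 := hKinv kk _ (S9.rotEl kk (S9.embed p N (S9.cds N w))) h1 (fun i => rfl)
      have h3 : S9.rotEl kk (S9.embed p N (S9.cds N w))
          = S9.embed p N (S9.scl t (S9.cds N w)) := by
        apply lp.ext
        funext i
        rw [S9.rotEl_apply, S9.embed_apply, S9.embed_apply]
        by_cases h : i < N
        · rw [dif_pos h, dif_pos h]
          show S9.ph i (kk i) * _ = _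
          rw [hkk]
          simp only [dif_pos h]
          rfl
        · rw [dif_neg h, dif_neg h, mul_zero]
      rwa [h3] at h2
    constructor
    · obtain ⟨r, hr⟩ := S9.rep_poly hQ N
      obtain ⟨g, hginv, ⟨c', hc'z, hc'K⟩, _⟩ := S9.key hc0 hcK hn r hr hKmem
      refine ⟨fun x => MvPolynomial.eval (S9.cds N x) g, S9.isPoly_of_rep g, ?_,
        c', hc'z, hc'K⟩
      intro k x x' hrel
      have hcds : S9.cds N x' = S9.scl (fun i : Fin N => k (i : ℕ)) (S9.cds N x) := by
        funext i
        exact hrel (i : ℕ)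
      show MvPolynomial.eval (S9.cds N x') g = MvPolynomial.eval (S9.cds N x) g
      rw [hcds, hginv]
    · intro m hm
      obtain ⟨r2, hr2h, hr2⟩ := S9.rep_hom hm N
      obtain ⟨g2, hg2inv, ⟨c2, hc2z, hc2K⟩, hg2hom⟩ := S9.key hc0 hcK hn r2 hr2 hKmem
      obtain ⟨d', hd'⟩ := hg2hom m hr2h
      refine ⟨d', fun x => MvPolynomial.eval (S9.cds N x) g2,
        S9.isHomPoly_of_rep g2 hd', ?_, c2, hc2z, hc2K⟩
      intro k x x' hrel
      have hcds : S9.cds N x' = S9.scl (fun i : Fin N => k (i : ℕ)) (S9.cds N x) := by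
        funext i
        exact hrel (i : ℕ)
      show MvPolynomial.eval (S9.cds N x') g2 = MvPolynomial.eval (S9.cds N x) g2
      rw [hcds, hg2inv]
end

section
/- Let 1 ≤ p < ∞ and X = ℓ^p, the Banach space of p-summable complex sequences indexed by m ≥ 1, and let R be the group of operators γ on X of the form (γx)_m = e^{2πik_m/m} x_m for arbitrary choices k₂, k₃, … ∈ ℕ ∪ {0}. If z ∈ X satisfies ‖z‖_p > 1, then there exists a homogeneous continuous polynomial P on X with P ∘ γ = P for every γ ∈ R such that sup_{‖x‖_p ≤ 1} |P(x)| < |P(z)|. -/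
open scoped ENNReal

set_option maxHeartbeats 1000000
open scoped ENNReal

noncomputable def coordCLM (p : ℝ≥0∞) [Fact (1 ≤ p)] (j : ℕ) :
    lp (fun _ : ℕ => ℂ) p →L[ℂ] ℂ :=
  LinearMap.mkContinuous
    { toFun := fun x => x j
      map_add' := fun x y => by simp [lp.coeFn_add]
      map_smul' := fun c x => by simp [lp.coeFn_smul] }
    1 (fun x => by
      exact (show ‖x j‖ ≤ 1 * ‖x‖ by simpa using lp.norm_apply_le_norm (zero_lt_one.trans_le (Fact.out : 1 ≤ p)).ne' x j))

@[simp] lemma coordCLM_apply (p : ℝ≥0∞) [Fact (1 ≤ p)] (j : ℕ)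
    (x : lp (fun _ : ℕ => ℂ) p) : coordCLM p j x = x j := rfl

lemma monomial_list (S : Finset ℕ) (a : ℕ → ℕ) (f : ℕ → ℂ) :
    ∏ i : Fin (S.val.bind fun j => Multiset.replicate (a j) j).toList.length,
      f ((S.val.bind fun j => Multiset.replicate (a j) j).toList.get i)
      = ∏ j ∈ S, f j ^ a j := by
  set M := S.val.bind fun j => Multiset.replicate (a j) j with hM
  set l := M.toList with hl
  rw [← List.prod_ofFn]
  have h2 : List.ofFn (fun i => f (l.get i)) = l.map f := by
    conv_rhs => rw [← List.ofFn_get l]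
    rw [List.map_ofFn]
    rfl
  rw [h2]
  have h3 : (↑(l.map f) : Multiset ℂ).prod = (M.map f).prod := by
    rw [← Multiset.map_coe, hl, Multiset.coe_toList]
  rw [Multiset.prod_coe] at h3
  rw [h3, hM, Multiset.map_bind, Multiset.prod_bind]
  simp only [Multiset.map_replicate, Multiset.prod_replicate]
  rw [Finset.prod_eq_multiset_prod]

lemma monomial_length (S : Finset ℕ) (a : ℕ → ℕ) :
    (S.val.bind fun j => Multiset.replicate (a j) j).toList.length = ∑ j ∈ S, a j := by
  rw [Multiset.length_toList, Multiset.card_bind]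
  rw [Finset.sum_eq_multiset_sum]
  congr 1
  apply Multiset.map_congr rfl
  intro j _
  simp


/-- On `X = ℓ^p` (`1 ≤ p < ∞`, complex), every `z` with `‖z‖ > 1` can be
separated from the closed unit ball by a homogeneous continuous polynomial invariant under
the group `R` of diagonal root-of-unity multipliers. -/
theorem statement10 (p : ℝ≥0∞) [Fact (1 ≤ p)] (hp : p ≠ ∞)
    (z : lp (fun _ : ℕ => ℂ) p) (hz : 1 < ‖z‖) :
    ∃ (m : ℕ) (P : lp (fun _ : ℕ => ℂ) p → ℂ), IsHomogeneousPolynomial m P ∧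
      (∀ (k : ℕ → ℕ) (x x' : lp (fun _ : ℕ => ℂ) p), rootsOfUnityRel k x x' → P x' = P x) ∧
      ∃ c, c < ‖P z‖ ∧ ∀ x : lp (fun _ : ℕ => ℂ) p, ‖x‖ ≤ 1 → ‖P x‖ ≤ c := by
  classical
  set r := p.toReal with hrdef
  have hr1 : 1 ≤ r := by
    rw [hrdef, ← ENNReal.toReal_one]
    exact ENNReal.toReal_mono hp (Fact.out : 1 ≤ p)
  have hr0 : (0:ℝ) < r := lt_of_lt_of_le one_pos hr1
  have hzsum : HasSum (fun i => ‖z i‖ ^ r) (‖z‖ ^ r) := lp.hasSum_norm hr0 z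
  have h1z : (1:ℝ) < ‖z‖ ^ r := by
    have := Real.rpow_lt_rpow (by norm_num) hz hr0
    simpa using this
  obtain ⟨S0, hS0⟩ := (hzsum.eventually (eventually_gt_nhds h1z)).exists
  set S : Finset ℕ := S0.filter (fun j => z j ≠ 0) with hSdef
  have hσ : (1:ℝ) < ∑ j ∈ S, ‖z j‖ ^ r := by
    rw [hSdef, Finset.sum_filter_of_ne]
    · exact hS0
    · intro j _ hne h0
      apply hne
      rw [h0]
      simp [Real.zero_rpow hr0.ne']
  set σ : ℝ := ∑ j ∈ S, ‖z j‖ ^ r with hσdef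
  have hσ0 : (0:ℝ) < σ := lt_trans one_pos hσ
  have hv : ∀ j ∈ S, 0 < ‖z j‖ := by
    intro j hj
    rw [hSdef, Finset.mem_filter] at hj
    simpa [norm_pos_iff] using hj.2
  set w : ℕ → ℝ := fun j => ‖z j‖ ^ r / σ with hwdef
  have hw : ∀ j ∈ S, 0 < w j := fun j hj => div_pos (Real.rpow_pos_of_pos (hv j hj) r) hσ0
  have hwsum : ∑ j ∈ S, w j = 1 := by
    rw [hwdef, ← Finset.sum_div, ← hσdef]
    exact div_self hσ0.ne'
  have hlogσ : 0 < Real.log σ := Real.log_pos hσ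
  set C : ℝ := ∑ j ∈ S, ((j:ℝ)+1) / w j with hCdef
  set N : ℕ := max ⌈r⌉₊ (⌈C / Real.log σ⌉₊ + 1) with hNdef
  have hNr : r ≤ (N:ℝ) := le_trans (Nat.le_ceil r) (by exact_mod_cast le_max_left _ _)
  have hN1 : (1:ℝ) ≤ (N:ℝ) := le_trans hr1 hNr
  have hN0 : (0:ℝ) < (N:ℝ) := lt_of_lt_of_le one_pos hN1
  have hNC : C < (N:ℝ) * Real.log σ := by
    rw [← div_lt_iff₀ hlogσ]
    calc C / Real.log σ ≤ (⌈C / Real.log σ⌉₊ : ℝ) := Nat.le_ceil _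
    _ < ((⌈C / Real.log σ⌉₊ + 1 : ℕ) : ℝ) := by exact_mod_cast Nat.lt_succ_self _
    _ ≤ (N:ℝ) := by exact_mod_cast le_max_right _ _
  set a : ℕ → ℕ := fun j => (j+1) * ⌈(N : ℝ) * w j / ((j:ℝ)+1)⌉₊ with hadef
  have hj1 : ∀ j : ℕ, (0:ℝ) < (j:ℝ)+1 := fun j => by positivity
  have hacast : ∀ j : ℕ, (a j : ℝ) = ((j:ℝ)+1) * (⌈(N : ℝ) * w j / ((j:ℝ)+1)⌉₊ : ℝ) := by
    intro j
    rw [hadef]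
    push_cast
    ring
  have haN : ∀ j ∈ S, (N:ℝ) * w j ≤ (a j : ℝ) := by
    intro j hj
    rw [hacast j]
    calc (N:ℝ) * w j = ((j:ℝ)+1) * ((N : ℝ) * w j / ((j:ℝ)+1)) := by field_simp
    _ ≤ ((j:ℝ)+1) * (⌈(N : ℝ) * w j / ((j:ℝ)+1)⌉₊ : ℝ) := by
        exact mul_le_mul_of_nonneg_left (Nat.le_ceil _) (hj1 j).le
  have hau : ∀ j ∈ S, (a j : ℝ) ≤ (N:ℝ) * w j + ((j:ℝ)+1) := by
    intro j hj
    rw [hacast j]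
    have h := Nat.ceil_lt_add_one (by positivity : (0:ℝ) ≤ (N : ℝ) * w j / ((j:ℝ)+1))
    calc ((j:ℝ)+1) * (⌈(N : ℝ) * w j / ((j:ℝ)+1)⌉₊ : ℝ)
        ≤ ((j:ℝ)+1) * ((N : ℝ) * w j / ((j:ℝ)+1) + 1) :=
          mul_le_mul_of_nonneg_left h.le (hj1 j).le
    _ = (N:ℝ) * w j + ((j:ℝ)+1) := by field_simp
  have hapos : ∀ j ∈ S, 0 < a j := by
    intro j hj
    apply Nat.mul_pos (Nat.succ_pos j)
    exact Nat.ceil_pos.2 (div_pos (mul_pos hN0 (hw j hj)) (hj1 j))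
  have hacastpos : ∀ j ∈ S, (0:ℝ) < (a j : ℝ) := by
    intro j hj
    exact_mod_cast hapos j hj
  set l : List ℕ := (S.val.bind fun j => Multiset.replicate (a j) j).toList with hldef
  set m : ℕ := l.length with hmdef
  have hm : (m:ℝ) = ∑ j ∈ S, (a j : ℝ) := by
    rw [hmdef, hldef, monomial_length]
    push_cast
    rfl
  have hmN : (N:ℝ) ≤ (m:ℝ) := by
    rw [hm]
    calc (N:ℝ) = ∑ j ∈ S, (N:ℝ) * w j := by rw [← Finset.mul_sum, hwsum, mul_one]
    _ ≤ ∑ j ∈ S, (a j:ℝ) := Finset.sum_le_sum haN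
  have hm0 : (0:ℝ) < (m:ℝ) := lt_of_lt_of_le hN0 hmN
  have hmr : r ≤ (m:ℝ) := le_trans hNr hmN
  have ham : ∀ j ∈ S, (a j : ℝ) ≤ (m:ℝ) := by
    intro j hj
    rw [hm]
    exact Finset.single_le_sum (f := fun i => (a i : ℝ)) (fun i _ => by positivity) hj
  set A : ContinuousMultilinearMap ℂ (fun _ : Fin m => lp (fun _ : ℕ => ℂ) p) ℂ :=
    (ContinuousMultilinearMap.mkPiAlgebraFin ℂ m ℂ).compContinuousLinearMap
      (fun i => coordCLM p (l.get i)) with hAdef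
  have hP : ∀ x : lp (fun _ : ℕ => ℂ) p, A (fun _ => x) = ∏ j ∈ S, (x j) ^ a j := by
    intro x
    rw [hAdef, ContinuousMultilinearMap.compContinuousLinearMap_apply,
      ContinuousMultilinearMap.mkPiAlgebraFin_apply, List.prod_ofFn]
    exact monomial_list S a (fun j => x j)
  have hPnorm : ∀ x : lp (fun _ : ℕ => ℂ) p,
      ‖A (fun _ => x)‖ = ∏ j ∈ S, ‖x j‖ ^ ((a j : ℝ)) := by
    intro x
    rw [hP x, norm_prod]
    exact Finset.prod_congr rfl fun j _ => by rw [norm_pow, Real.rpow_natCast]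
  refine ⟨m, fun x => A (fun _ => x), ⟨A, fun x => rfl⟩, ?_, ?_⟩
  · -- invariance
    intro k x x' hrel
    simp only []
    rw [hP, hP]
    refine Finset.prod_congr rfl ?_
    intro j hj
    rw [hrel j, mul_pow]
    have hj0 : ((j:ℂ)+1) ≠ 0 := Nat.cast_add_one_ne_zero j
    have h1 : Complex.exp (2 * Real.pi * Complex.I * (k j : ℂ) / ((j : ℂ) + 1)) ^ a j = 1 := by
      rw [← Complex.exp_nat_mul]
      have e : (a j : ℂ) * (2 * Real.pi * Complex.I * (k j : ℂ) / ((j : ℂ) + 1))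
          = ((k j * ⌈(N : ℝ) * w j / ((j:ℝ)+1)⌉₊ : ℕ) : ℂ) * (2 * Real.pi * Complex.I) := by
        rw [hadef]
        push_cast
        field_simp
      rw [e, Complex.exp_nat_mul_two_pi_mul_I]
    rw [h1, one_mul]
  · -- separation
    refine ⟨∏ j ∈ S, ((a j:ℝ)/(m:ℝ)) ^ ((a j:ℝ)/r), ?_, ?_⟩
    · -- c < ‖P z‖
      rw [hPnorm]
      have hcpos : 0 < ∏ j ∈ S, ((a j:ℝ)/(m:ℝ)) ^ ((a j:ℝ)/r) :=
        Finset.prod_pos fun j hj =>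
          Real.rpow_pos_of_pos (div_pos (hacastpos j hj) hm0) _
      have hZpos : 0 < ∏ j ∈ S, ‖z j‖ ^ ((a j:ℝ)) :=
        Finset.prod_pos fun j hj => Real.rpow_pos_of_pos (hv j hj) _
      rw [← Real.log_lt_log_iff hcpos hZpos]
      rw [Real.log_prod (fun j hj =>
            (Real.rpow_pos_of_pos (div_pos (hacastpos j hj) hm0) _).ne'),
          Real.log_prod (fun j hj => (Real.rpow_pos_of_pos (hv j hj) _).ne')]
      have e1 : ∀ j ∈ S, Real.log (((a j:ℝ)/(m:ℝ)) ^ ((a j:ℝ)/r))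
          = ((a j:ℝ)/r) * Real.log ((a j:ℝ)/(m:ℝ)) :=
        fun j hj => Real.log_rpow (div_pos (hacastpos j hj) hm0) _
      have e2 : ∀ j ∈ S, Real.log (‖z j‖ ^ ((a j:ℝ)))
          = (a j:ℝ) * Real.log ‖z j‖ :=
        fun j hj => Real.log_rpow (hv j hj) _
      rw [Finset.sum_congr rfl e1, Finset.sum_congr rfl e2]
      -- key inequality
      have hterm : ∀ j ∈ S, (a j:ℝ) * Real.log ((a j:ℝ)/(m:ℝ))
          ≤ (a j:ℝ) * Real.log (w j) + ((j:ℝ)+1)/(w j) := by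
        intro j hj
        have hmw : (0:ℝ) < (m:ℝ) * w j := mul_pos hm0 (hw j hj)
        have h1 : Real.log ((a j:ℝ)/(m:ℝ)) - Real.log (w j)
            = Real.log ((a j:ℝ)/((m:ℝ) * w j)) := by
          rw [Real.log_div (hacastpos j hj).ne' hm0.ne',
              Real.log_div (hacastpos j hj).ne' hmw.ne',
              Real.log_mul hm0.ne' (hw j hj).ne']
          ring
        have h2 : Real.log ((a j:ℝ)/((m:ℝ)*w j)) ≤ (a j:ℝ)/((m:ℝ)*w j) - 1 :=
          Real.log_le_sub_one_of_pos (div_pos (hacastpos j hj) hmw)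
        have hle : (a j:ℝ) ≤ (m:ℝ)*w j + ((j:ℝ)+1) := by
          refine le_trans (hau j hj) ?_
          have := mul_le_mul_of_nonneg_right hmN (hw j hj).le
          linarith
        have h3 : (a j:ℝ)/((m:ℝ)*w j) - 1 ≤ ((j:ℝ)+1)/((m:ℝ)*w j) := by
          rw [div_sub_one hmw.ne', div_le_div_iff₀ hmw hmw]
          nlinarith
        have hb : Real.log ((a j:ℝ)/(m:ℝ)) ≤ Real.log (w j) + ((j:ℝ)+1)/((m:ℝ)*w j) := by
          linarith
        have h4 : (a j:ℝ) * Real.log ((a j:ℝ)/(m:ℝ))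
            ≤ (a j:ℝ) * (Real.log (w j) + ((j:ℝ)+1)/((m:ℝ)*w j)) :=
          mul_le_mul_of_nonneg_left hb (hacastpos j hj).le
        have h5 : (a j:ℝ) * (((j:ℝ)+1)/((m:ℝ)*w j)) ≤ ((j:ℝ)+1)/(w j) := by
          have h6 : (a j:ℝ) * (((j:ℝ)+1)/((m:ℝ)*w j)) ≤ (m:ℝ) * (((j:ℝ)+1)/((m:ℝ)*w j)) :=
            mul_le_mul_of_nonneg_right (ham j hj) (by positivity)
          have h7 : (m:ℝ) * (((j:ℝ)+1)/((m:ℝ)*w j)) = ((j:ℝ)+1)/(w j) := by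
            field_simp [(hw j hj).ne']
          linarith
        nlinarith [h4, h5]
      have key : ∑ j ∈ S, (a j:ℝ) * Real.log ((a j:ℝ)/(m:ℝ))
          < ∑ j ∈ S, (a j:ℝ) * (r * Real.log ‖z j‖) := by
        have hsum1 : ∑ j ∈ S, (a j:ℝ) * Real.log ((a j:ℝ)/(m:ℝ))
            ≤ ∑ j ∈ S, ((a j:ℝ) * Real.log (w j) + ((j:ℝ)+1)/(w j)) :=
          Finset.sum_le_sum hterm
        have hsum2 : ∑ j ∈ S, ((a j:ℝ) * Real.log (w j) + ((j:ℝ)+1)/(w j))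
            = (∑ j ∈ S, (a j:ℝ) * Real.log (w j)) + C := by
          rw [Finset.sum_add_distrib]
        have hfin : ∀ j ∈ S, (a j:ℝ) * (r * Real.log ‖z j‖)
            = (a j:ℝ) * Real.log (w j) + (a j:ℝ) * Real.log σ := by
          intro j hj
          have e3 : r * Real.log ‖z j‖ = Real.log (‖z j‖ ^ r) :=
            (Real.log_rpow (hv j hj) r).symm
          rw [e3]
          have e4 : ‖z j‖ ^ r = w j * σ := by
            rw [hwdef]
            field_simp
          rw [e4, Real.log_mul (hw j hj).ne' hσ0.ne', mul_add]
        rw [Finset.sum_congr rfl hfin, Finset.sum_add_distrib]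
        have e5 : ∑ j ∈ S, (a j:ℝ) * Real.log σ = (m:ℝ) * Real.log σ := by
          rw [← Finset.sum_mul, ← hm]
        rw [e5]
        have : (N:ℝ) * Real.log σ ≤ (m:ℝ) * Real.log σ :=
          mul_le_mul_of_nonneg_right hmN hlogσ.le
        linarith
      have hL : ∑ j ∈ S, ((a j:ℝ)/r) * Real.log ((a j:ℝ)/(m:ℝ))
          = (1/r) * ∑ j ∈ S, (a j:ℝ) * Real.log ((a j:ℝ)/(m:ℝ)) := by
        rw [Finset.mul_sum]
        exact Finset.sum_congr rfl fun j _ => by ring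
      have hR : ∑ j ∈ S, (a j:ℝ) * Real.log ‖z j‖
          = (1/r) * ∑ j ∈ S, (a j:ℝ) * (r * Real.log ‖z j‖) := by
        rw [Finset.mul_sum]
        refine Finset.sum_congr rfl fun j _ => ?_
        field_simp
      rw [hL, hR]
      exact mul_lt_mul_of_pos_left key (by positivity)
    · -- bound on the ball
      intro x hx
      rw [hPnorm]
      have hxsum : ∑ j ∈ S, ‖x j‖ ^ r ≤ 1 := by
        have h1 : ∑ j ∈ S, ‖x j‖ ^ r ≤ ∑' i, ‖x i‖ ^ r :=
          Summable.sum_le_tsum S (fun i _ => Real.rpow_nonneg (norm_nonneg _) r)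
            (lp.hasSum_norm hr0 x).summable
        have h2 : (∑' i, ‖x i‖ ^ r) = ‖x‖ ^ r := (lp.norm_rpow_eq_tsum hr0 x).symm
        have h3 : ‖x‖ ^ r ≤ 1 := Real.rpow_le_one (norm_nonneg _) hx hr0.le
        linarith
      have ht0 : ∀ j ∈ S, 0 < (a j:ℝ)/(m:ℝ) :=
        fun j hj => div_pos (hacastpos j hj) hm0
      have htsum : ∑ j ∈ S, (a j:ℝ)/(m:ℝ) = 1 := by
        rw [← Finset.sum_div, ← hm]
        exact div_self hm0.ne'
      have hgm := Real.geom_mean_le_arith_mean_weighted S (fun j => (a j:ℝ)/(m:ℝ))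
        (fun j => ‖x j‖ ^ r / ((a j:ℝ)/(m:ℝ)))
        (fun j hj => (ht0 j hj).le) htsum (fun j hj => by positivity)
      have hgm2 : ∑ j ∈ S, ((a j:ℝ)/(m:ℝ)) * (‖x j‖ ^ r / ((a j:ℝ)/(m:ℝ)))
          = ∑ j ∈ S, ‖x j‖ ^ r := by
        refine Finset.sum_congr rfl fun j hj => ?_
        rw [mul_comm, div_mul_cancel₀ _ (ht0 j hj).ne']
      have hprod1 : ∏ j ∈ S, (‖x j‖ ^ r) ^ ((a j:ℝ)/(m:ℝ))
          ≤ ∏ j ∈ S, ((a j:ℝ)/(m:ℝ)) ^ ((a j:ℝ)/(m:ℝ)) := by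
        have e : ∀ j ∈ S, (‖x j‖ ^ r) ^ ((a j:ℝ)/(m:ℝ))
            = (‖x j‖ ^ r / ((a j:ℝ)/(m:ℝ))) ^ ((a j:ℝ)/(m:ℝ))
              * ((a j:ℝ)/(m:ℝ)) ^ ((a j:ℝ)/(m:ℝ)) := by
          intro j hj
          rw [← Real.mul_rpow (by positivity) (ht0 j hj).le,
            div_mul_cancel₀ _ (ht0 j hj).ne']
        rw [Finset.prod_congr rfl e, Finset.prod_mul_distrib]
        have hone : ∏ j ∈ S, (‖x j‖ ^ r / ((a j:ℝ)/(m:ℝ))) ^ ((a j:ℝ)/(m:ℝ)) ≤ 1 := by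
          refine le_trans hgm ?_
          rw [hgm2]
          exact hxsum
        have hnn : (0:ℝ) ≤ ∏ j ∈ S, ((a j:ℝ)/(m:ℝ)) ^ ((a j:ℝ)/(m:ℝ)) :=
          Finset.prod_nonneg fun j hj => Real.rpow_nonneg (ht0 j hj).le _
        calc (∏ j ∈ S, (‖x j‖ ^ r / ((a j:ℝ)/(m:ℝ))) ^ ((a j:ℝ)/(m:ℝ)))
            * ∏ j ∈ S, ((a j:ℝ)/(m:ℝ)) ^ ((a j:ℝ)/(m:ℝ))
            ≤ 1 * ∏ j ∈ S, ((a j:ℝ)/(m:ℝ)) ^ ((a j:ℝ)/(m:ℝ)) :=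
          mul_le_mul_of_nonneg_right hone hnn
        _ = _ := one_mul _
      have hfinal := Real.rpow_le_rpow
        (Finset.prod_nonneg fun j _ => Real.rpow_nonneg (Real.rpow_nonneg (norm_nonneg _) r) _)
        hprod1 (by positivity : (0:ℝ) ≤ (m:ℝ)/r)
      rw [← Real.finset_prod_rpow _ _
            (fun j _ => Real.rpow_nonneg (Real.rpow_nonneg (norm_nonneg _) r) _) _,
          ← Real.finset_prod_rpow _ _
            (fun j hj => Real.rpow_nonneg (ht0 j hj).le _) _] at hfinal
      have eL : ∀ j ∈ S, ((‖x j‖ ^ r) ^ ((a j:ℝ)/(m:ℝ))) ^ ((m:ℝ)/r) = ‖x j‖ ^ ((a j:ℝ)) := by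
        intro j hj
        calc ((‖x j‖ ^ r) ^ ((a j:ℝ)/(m:ℝ))) ^ ((m:ℝ)/r)
            = (‖x j‖ ^ (r * ((a j:ℝ)/(m:ℝ)))) ^ ((m:ℝ)/r) := by
              rw [← Real.rpow_mul (norm_nonneg _)]
        _ = ‖x j‖ ^ (r * ((a j:ℝ)/(m:ℝ)) * ((m:ℝ)/r)) := by
              rw [← Real.rpow_mul (norm_nonneg _)]
        _ = ‖x j‖ ^ ((a j:ℝ)) := by
              congr 1
              field_simp
      have eR : ∀ j ∈ S, (((a j:ℝ)/(m:ℝ)) ^ ((a j:ℝ)/(m:ℝ))) ^ ((m:ℝ)/r)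
          = ((a j:ℝ)/(m:ℝ)) ^ ((a j:ℝ)/r) := by
        intro j hj
        rw [← Real.rpow_mul (ht0 j hj).le]
        congr 1
        field_simp
      rw [Finset.prod_congr rfl eL, Finset.prod_congr rfl eR] at hfinal
      exact hfinal
end

section
/- Let 1 ≤ p < ∞, fix a strictly increasing sequence of non-negative integers (n_k)_{k≥1} with n₁ = 0, and set N_k = {n_k + 1, …, n_{k+1}}. Let S be the group of all permutations σ of the positive integers with σ(N_k) = N_k for every k, acting on ℓ^p by (x_j)_j ↦ (x_{σ(j)})_j. If z ∈ ℓ^p satisfies ‖z‖_p > 1, then there exists a homogeneous continuous polynomial P on ℓ^p with P((x_{σ(j)})_j) = P(x) for every σ ∈ S and every x ∈ ℓ^p, such that sup_{‖x‖_p ≤ 1} |P(x)| < |P(z)|. -/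
open scoped ENNReal

/-- A permutation `σ` of the index set preserves the blocks
`N_k = {n_k, …, n_{k+1} - 1}` (0-based) determined by the strictly increasing sequence
`nseq` with `nseq 0 = 0`. -/
def PreservesBlocks (nseq : ℕ → ℕ) (σ : Equiv.Perm ℕ) : Prop :=
  ∀ k j : ℕ, nseq k ≤ j → j < nseq (k + 1) → nseq k ≤ σ j ∧ σ j < nseq (k + 1)

section Helpers

lemma lemA {ι : Type*} [Fintype ι] (u : ι → ℂ) (hu : ∀ i, ‖u i‖ ≤ 1)
    (L : ℕ) (ε : ℝ) (hε : 0 < ε) :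
    ∃ M, L ≤ M ∧ ∀ i, ‖u i‖ = 1 → ‖u i ^ M - 1‖ ≤ ε := by
  classical
  set v : ℕ → (ι → ℂ) := fun M i => u i ^ (L * M) with hv
  have hvmem : ∀ M, v M ∈ Metric.closedBall (0 : ι → ℂ) 1 := by
    intro M
    rw [Metric.mem_closedBall, dist_zero_right]
    refine pi_norm_le_iff_of_nonneg zero_le_one |>.2 fun i => ?_
    rw [norm_pow]
    exact pow_le_one₀ (norm_nonneg _) (hu i)
  obtain ⟨b, -, φ, hφ, htend⟩ :=
    tendsto_subseq_of_bounded Metric.isBounded_closedBall hvmem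
  rw [Metric.tendsto_atTop] at htend
  obtain ⟨N, hN⟩ := htend (ε / 2) (by linarith)
  refine ⟨L * (φ (N + 1) - φ N), ?_, ?_⟩
  · have : φ N < φ (N + 1) := hφ (Nat.lt_succ_self N)
    have h1 : 1 ≤ φ (N + 1) - φ N := by omega
    calc L = L * 1 := (mul_one L).symm
    _ ≤ L * (φ (N + 1) - φ N) := Nat.mul_le_mul_left L h1
  · intro i hi
    have hφle : φ N ≤ φ (N + 1) := (hφ (Nat.lt_succ_self N)).le
    have harith : L * φ (N + 1) = L * φ N + L * (φ (N + 1) - φ N) := by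
      rw [← Nat.mul_add, Nat.add_sub_cancel' hφle]
    have key : u i ^ (L * φ N) * (u i ^ (L * (φ (N + 1) - φ N)) - 1)
        = v (φ (N + 1)) i - v (φ N) i := by
      simp only [hv]
      rw [mul_sub, mul_one, ← pow_add, ← harith]
    have hnorm1 : ‖u i ^ (L * φ N)‖ = 1 := by rw [norm_pow, hi, one_pow]
    have : ‖u i ^ (L * (φ (N + 1) - φ N)) - 1‖ = ‖v (φ (N + 1)) i - v (φ N) i‖ := by
      rw [← key, norm_mul, hnorm1, one_mul]
    rw [this]
    have h1 : dist (v (φ (N + 1)) i) (v (φ N) i) ≤ dist (v (φ (N + 1))) (v (φ N)) :=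
      dist_le_pi_dist _ _ i
    have h2 : dist (v (φ (N + 1))) (v (φ N)) ≤ dist (v (φ (N+1))) b + dist b (v (φ N)) :=
      dist_triangle _ _ _
    have h3 := hN (N + 1) (Nat.le_succ N)
    have h4 := hN N le_rfl
    rw [dist_comm b] at h2
    simp only [Function.comp] at h3 h4
    rw [← dist_eq_norm]
    linarith

lemma lemB {ι : Type*} [Fintype ι] [Nonempty ι] (c : ι → ℂ)
    (B : ℝ) (hB : 0 ≤ B) (i₀ : ι) (hi₀ : B < ‖c i₀‖) (L : ℕ) :
    ∃ M, L ≤ M ∧ (Fintype.card ι : ℝ) * B ^ M < ‖∑ i, c i ^ M‖ := by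
  classical
  set ρ : ℝ := Finset.univ.sup' Finset.univ_nonempty (fun i => ‖c i‖) with hρdef
  have hle : ∀ i, ‖c i‖ ≤ ρ := fun i => Finset.le_sup' (fun i => ‖c i‖) (Finset.mem_univ i)
  have hBρ : B < ρ := lt_of_lt_of_le hi₀ (hle i₀)
  have hρ0 : 0 < ρ := lt_of_le_of_lt hB hBρ
  set u : ι → ℂ := fun i => c i / (ρ : ℂ) with hu
  have hρC : (ρ : ℂ) ≠ 0 := by exact_mod_cast hρ0.ne'
  have hunorm : ∀ i, ‖u i‖ = ‖c i‖ / ρ := by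
    intro i; rw [hu]; rw [norm_div, Complex.norm_real, Real.norm_of_nonneg hρ0.le]
  have hule : ∀ i, ‖u i‖ ≤ 1 := by
    intro i
    rw [hunorm, div_le_one hρ0]
    exact hle i
  set J : Finset ι := Finset.univ.filter (fun i => ‖u i‖ = 1) with hJ
  have hJne : J.Nonempty := by
    obtain ⟨i₁, -, hi₁⟩ := Finset.exists_mem_eq_sup' Finset.univ_nonempty (fun i => ‖c i‖)
    refine ⟨i₁, Finset.mem_filter.2 ⟨Finset.mem_univ _, ?_⟩⟩
    rw [← hρdef] at hi₁
    rw [hunorm, ← hi₁, div_self hρ0.ne']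
  -- tail sums tend to 0
  have hg : Filter.Tendsto (fun M => ∑ i ∈ Jᶜ, ‖u i‖ ^ M) Filter.atTop (nhds 0) := by
    have : ∀ i ∈ Jᶜ, Filter.Tendsto (fun M => ‖u i‖ ^ M) Filter.atTop (nhds 0) := by
      intro i hi
      refine tendsto_pow_atTop_nhds_zero_of_lt_one (norm_nonneg _) ?_
      rcases lt_or_eq_of_le (hule i) with h | h
      · exact h
      · exact absurd (Finset.mem_filter.2 ⟨Finset.mem_univ i, h⟩) (Finset.mem_compl.1 hi)
    simpa using tendsto_finset_sum Jᶜ this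
  obtain ⟨M₁, hM₁⟩ := Filter.eventually_atTop.1
    (hg.eventually (gt_mem_nhds (by norm_num : (0:ℝ) < 1/4)))
  -- (card * (B/ρ)^M) tends to 0
  have hh : Filter.Tendsto (fun M => (Fintype.card ι : ℝ) * (B / ρ) ^ M)
      Filter.atTop (nhds 0) := by
    have h1 : Filter.Tendsto (fun M => (B / ρ) ^ M) Filter.atTop (nhds 0) :=
      tendsto_pow_atTop_nhds_zero_of_lt_one (div_nonneg hB hρ0.le) ((div_lt_one hρ0).2 hBρ)
    simpa using h1.const_mul (Fintype.card ι : ℝ)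
  obtain ⟨M₂, hM₂⟩ := Filter.eventually_atTop.1
    (hh.eventually (gt_mem_nhds (by norm_num : (0:ℝ) < 1/4)))
  obtain ⟨M, hML, hMnear⟩ := lemA u hule (max (max L M₁) M₂) (1/4) (by norm_num)
  have hML' : L ≤ M := le_trans (le_max_left L M₁ |>.trans (le_max_left _ M₂)) hML
  have hMM₁ : M₁ ≤ M := le_trans ((le_max_right L M₁).trans (le_max_left _ M₂)) hML
  have hMM₂ : M₂ ≤ M := le_trans (le_max_right _ M₂) hML
  refine ⟨M, hML', ?_⟩
  -- main estimate
  have hsplit : ∑ i, u i ^ M = (∑ i ∈ J, u i ^ M) + ∑ i ∈ Jᶜ, u i ^ M := by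
    rw [Finset.sum_add_sum_compl]
  have hJbound : ‖(∑ i ∈ J, u i ^ M) - (J.card : ℂ)‖ ≤ (J.card : ℝ) * (1/4) := by
    have : (∑ i ∈ J, u i ^ M) - (J.card : ℂ) = ∑ i ∈ J, (u i ^ M - 1) := by
      rw [Finset.sum_sub_distrib]
      simp
    rw [this]
    calc ‖∑ i ∈ J, (u i ^ M - 1)‖ ≤ ∑ i ∈ J, ‖u i ^ M - 1‖ := norm_sum_le _ _
    _ ≤ ∑ _i ∈ J, (1/4 : ℝ) := by
        refine Finset.sum_le_sum fun i hi => ?_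
        exact hMnear i (Finset.mem_filter.1 hi).2
    _ = (J.card : ℝ) * (1/4) := by rw [Finset.sum_const, nsmul_eq_mul]
  have hJlow : (3/4 : ℝ) ≤ ‖∑ i ∈ J, u i ^ M‖ := by
    have h1 : (J.card : ℝ) - ‖(∑ i ∈ J, u i ^ M) - (J.card : ℂ)‖ ≤ ‖∑ i ∈ J, u i ^ M‖ := by
      have := norm_sub_norm_le (∑ i ∈ J, u i ^ M) ((J.card : ℂ) : ℂ)
      have h2 : ‖((J.card : ℕ) : ℂ)‖ = (J.card : ℝ) := by
        simp
      nlinarith [norm_sub_norm_le ((J.card : ℂ)) (∑ i ∈ J, u i ^ M), norm_sub_rev ((∑ i ∈ J, u i ^ M)) ((J.card : ℂ))]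
    have hc1 : (1 : ℝ) ≤ (J.card : ℝ) := by exact_mod_cast Nat.one_le_iff_ne_zero.2 (Finset.card_ne_zero_of_mem hJne.choose_spec)
    nlinarith [hJbound]
  have hcompl : ‖∑ i ∈ Jᶜ, u i ^ M‖ ≤ 1/4 := by
    calc ‖∑ i ∈ Jᶜ, u i ^ M‖ ≤ ∑ i ∈ Jᶜ, ‖u i ^ M‖ := norm_sum_le _ _
    _ = ∑ i ∈ Jᶜ, ‖u i‖ ^ M := by simp [norm_pow]
    _ ≤ 1/4 := (hM₁ M hMM₁).le
  have husum : (1/2 : ℝ) ≤ ‖∑ i, u i ^ M‖ := by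
    rw [hsplit]
    have h5 := norm_sub_le ((∑ i ∈ J, u i ^ M) + ∑ i ∈ Jᶜ, u i ^ M) (∑ i ∈ Jᶜ, u i ^ M)
    simp only [add_sub_cancel_right] at h5
    linarith
  have hc : ∀ i, c i = (ρ : ℂ) * u i := by
    intro i; rw [hu]; field_simp
  have hsum_eq : ∑ i, c i ^ M = (ρ : ℂ) ^ M * ∑ i, u i ^ M := by
    rw [Finset.mul_sum]
    refine Finset.sum_congr rfl fun i _ => ?_
    simp [hc i, mul_pow]
  have hnormsum : ‖∑ i, c i ^ M‖ = ρ ^ M * ‖∑ i, u i ^ M‖ := by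
    rw [hsum_eq, norm_mul, norm_pow, Complex.norm_real, Real.norm_of_nonneg hρ0.le]
  rw [hnormsum]
  have hρM : (0:ℝ) < ρ ^ M := pow_pos hρ0 M
  have hBM : (Fintype.card ι : ℝ) * B ^ M = ρ ^ M * ((Fintype.card ι : ℝ) * (B/ρ) ^ M) := by
    rw [div_pow]; field_simp
  rw [hBM]
  have h4 := hM₂ M hMM₂
  nlinarith [hρM, husum, h4]


lemma exists_block {nseq : ℕ → ℕ} (hmono : StrictMono nseq) (h0 : nseq 0 = 0) (j : ℕ) :
    ∃ k, nseq k ≤ j ∧ j < nseq (k + 1) := by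
  classical
  set k := Nat.findGreatest (fun k => nseq k ≤ j) j with hk
  have h1 : nseq k ≤ j :=
    Nat.findGreatest_spec (P := fun k => nseq k ≤ j) (Nat.zero_le j) (show nseq 0 ≤ j by rw [h0]; exact Nat.zero_le j)
  refine ⟨k, h1, ?_⟩
  by_contra h
  push_neg at h
  have hk1 : k + 1 ≤ j := le_trans hmono.le_apply h
  have h2 := Nat.le_findGreatest (P := fun k => nseq k ≤ j) hk1 h
  omega

lemma block_unique {nseq : ℕ → ℕ} (hmono : StrictMono nseq) {k k' j : ℕ}
    (h1 : nseq k ≤ j) (h2 : j < nseq (k + 1)) (h3 : nseq k' ≤ j) (h4 : j < nseq (k' + 1)) :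
    k = k' := by
  by_contra h
  rcases Nat.lt_or_ge k k' with hlt | hge
  · have : nseq (k + 1) ≤ nseq k' := hmono.monotone (by omega)
    omega
  · have : nseq (k' + 1) ≤ nseq k := hmono.monotone (by omega)
    omega

noncomputable def evalCLM (p : ℝ≥0∞) [Fact (1 ≤ p)] {n : ℕ} (b : Fin n → ℂ)
    (σ : Equiv.Perm (Fin n)) : lp (fun _ : ℕ => ℂ) p →L[ℂ] ℂ :=
  LinearMap.mkContinuous
    { toFun := fun x => ∑ j : Fin n, b j * x (σ j)
      map_add' := by
        intro x y
        simp only [lp.coeFn_add, Pi.add_apply, mul_add, Finset.sum_add_distrib]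
      map_smul' := by
        intro c x
        simp only [lp.coeFn_smul, Pi.smul_apply, smul_eq_mul, RingHom.id_apply,
          Finset.mul_sum]
        exact Finset.sum_congr rfl fun j _ => by ring }
    (∑ j : Fin n, ‖b j‖)
    (by
      intro x
      have hp0 : p ≠ 0 := by
        have h1 : (1 : ℝ≥0∞) ≤ p := Fact.out
        intro h; rw [h] at h1; simp at h1
      calc ‖∑ j : Fin n, b j * x (σ j)‖ ≤ ∑ j : Fin n, ‖b j * x (σ j)‖ := norm_sum_le _ _
      _ = ∑ j : Fin n, ‖b j‖ * ‖x (σ j)‖ := by simp [norm_mul]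
      _ ≤ ∑ j : Fin n, ‖b j‖ * ‖x‖ := by
          refine Finset.sum_le_sum fun j _ => ?_
          exact mul_le_mul_of_nonneg_left (lp.norm_apply_le_norm hp0 x (σ j)) (norm_nonneg _)
      _ = (∑ j : Fin n, ‖b j‖) * ‖x‖ := by rw [Finset.sum_mul])

lemma evalCLM_apply (p : ℝ≥0∞) [Fact (1 ≤ p)] {n : ℕ} (b : Fin n → ℂ)
    (σ : Equiv.Perm (Fin n)) (x : lp (fun _ : ℕ => ℂ) p) :
    evalCLM p b σ x = ∑ j : Fin n, b j * x (σ j) := rfl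

end Helpers

/-- Let `1 ≤ p < ∞`, let `(n_k)` be strictly increasing with `n_1 = 0`, and
let `S` be the group of permutations of the indices preserving each block
`N_k = {n_k + 1, …, n_{k+1}}`, acting on `ℓ^p` by permuting coordinates. Every `z ∈ ℓ^p`
with `‖z‖ > 1` is separated from the closed unit ball by an `S`-invariant homogeneous
continuous polynomial. -/
theorem statement13 (p : ℝ≥0∞) [Fact (1 ≤ p)] (hp : p ≠ ∞)
    (nseq : ℕ → ℕ) (hmono : StrictMono nseq) (h0 : nseq 0 = 0)
    (z : lp (fun _ : ℕ => ℂ) p) (hz : 1 < ‖z‖) :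
    ∃ (m : ℕ) (P : lp (fun _ : ℕ => ℂ) p → ℂ), IsHomogeneousPolynomial m P ∧
      (∀ σ : Equiv.Perm ℕ, PreservesBlocks nseq σ →
        ∀ x x' : lp (fun _ : ℕ => ℂ) p, (∀ i : ℕ, x' i = x (σ i)) → P x' = P x) ∧
      ∃ c, c < ‖P z‖ ∧ ∀ x : lp (fun _ : ℕ => ℂ) p, ‖x‖ ≤ 1 → ‖P x‖ ≤ c := by
  classical
  have h1p : (1 : ℝ≥0∞) ≤ p := Fact.out
  have hpr1 : 1 ≤ p.toReal := by
    rw [← ENNReal.toReal_one]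
    exact ENNReal.toReal_mono hp h1p
  set pr := p.toReal with hprdef
  have hpr0 : 0 < pr := lt_of_lt_of_le one_pos hpr1
  -- find a block boundary n carrying more than unit mass
  have hz0 : 0 < ‖z‖ := lt_trans one_pos hz
  have hz1 : 1 < ‖z‖ ^ pr := by
    rw [show (1:ℝ) = 1 ^ pr by rw [Real.one_rpow]]
    exact Real.rpow_lt_rpow zero_le_one hz hpr0
  have hzsum := lp.hasSum_norm hpr0 z
  obtain ⟨n₀, hn₀⟩ := Filter.eventually_atTop.1
    ((hzsum.tendsto_sum_nat).eventually (lt_mem_nhds hz1))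
  set n := nseq n₀ with hndef
  have hn0n : n₀ ≤ n := hmono.le_apply
  set T : ℝ := ∑ j : Fin n, ‖z (j : ℕ)‖ ^ pr with hTdef
  have hT : 1 < T := by
    rw [hTdef, Fin.sum_univ_eq_sum_range (fun j => ‖z j‖ ^ pr) n]
    refine lt_of_lt_of_le (hn₀ n₀ le_rfl) ?_
    exact Finset.sum_le_sum_of_subset_of_nonneg
      (Finset.range_subset_range.2 hn0n)
      (fun i _ _ => Real.rpow_nonneg (norm_nonneg _) _)
  have hT0 : 0 < T := lt_trans one_pos hT
  -- the coefficients
  set a : Fin n → ℂ :=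
    fun j => (starRingEnd ℂ) (z (j : ℕ)) * ((‖z (j : ℕ)‖ ^ (pr - 2) : ℝ) : ℂ) with hadef
  have haz : ∀ j : Fin n, a j * z (j : ℕ) = ((‖z (j : ℕ)‖ ^ pr : ℝ) : ℂ) := by
    intro j
    by_cases hzj : z (j : ℕ) = 0
    · simp [hadef, hzj, Real.zero_rpow hpr0.ne']
    · have hzjn : (0:ℝ) < ‖z (j : ℕ)‖ := norm_pos_iff.2 hzj
      rw [hadef]
      have h1 : (starRingEnd ℂ) (z (j:ℕ)) * ((‖z (j:ℕ)‖ ^ (pr - 2) : ℝ) : ℂ) * z (j:ℕ)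
          = ((starRingEnd ℂ) (z (j:ℕ)) * z (j:ℕ)) * ((‖z (j:ℕ)‖ ^ (pr - 2) : ℝ) : ℂ) := by ring
      rw [h1, Complex.conj_mul', ← Complex.ofReal_pow, ← Complex.ofReal_mul]
      congr 1
      rw [← Real.rpow_natCast ‖z (j:ℕ)‖ 2, ← Real.rpow_add hzjn]
      norm_num
  have hanorm : 1 < pr → ∀ j : Fin n, ‖a j‖ = ‖z (j : ℕ)‖ ^ (pr - 1) := by
    intro hpr j
    by_cases hzj : z (j : ℕ) = 0
    · simp [hadef, hzj, Real.zero_rpow (by linarith : pr - 1 ≠ 0)]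
    · have hzjn : (0:ℝ) < ‖z (j : ℕ)‖ := norm_pos_iff.2 hzj
      rw [hadef, norm_mul, RCLike.norm_conj, Complex.norm_real,
        Real.norm_of_nonneg (Real.rpow_nonneg (norm_nonneg _) _)]
      nth_rewrite 1 [← Real.rpow_one ‖z (j:ℕ)‖]
      rw [← Real.rpow_add hzjn]
      congr 1
      ring
  have ha_le_one : pr = 1 → ∀ j : Fin n, ‖a j‖ ≤ 1 := by
    intro hpr j
    by_cases hzj : z (j : ℕ) = 0
    · simp [hadef, hzj]
    · have hzjn : (0:ℝ) < ‖z (j : ℕ)‖ := norm_pos_iff.2 hzj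
      rw [hadef, norm_mul, RCLike.norm_conj, Complex.norm_real,
        Real.norm_of_nonneg (Real.rpow_nonneg (norm_nonneg _) _)]
      have h2 : pr - 2 = -1 := by rw [hpr]; norm_num
      rw [h2, Real.rpow_neg_one, mul_inv_cancel₀ hzjn.ne']
  -- the Hölder constant
  set C : ℝ := T ^ (1 - 1/pr) with hCdef
  have hC0 : 0 ≤ C := Real.rpow_nonneg hT0.le _
  have hCT : C < T := by
    rw [hCdef]
    nth_rewrite 2 [show T = T ^ (1:ℝ) by rw [Real.rpow_one]]
    rw [Real.rpow_lt_rpow_left_iff hT]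
    have : 0 < 1/pr := by positivity
    linarith
  -- partial p-th power sums of permuted coordinates are bounded by the norm
  have hxsum : ∀ (σ : Equiv.Perm (Fin n)) (x : lp (fun _ : ℕ => ℂ) p),
      ∑ j : Fin n, ‖x ((σ j : ℕ))‖ ^ pr ≤ ‖x‖ ^ pr := by
    intro σ x
    have h1 : ∑ j : Fin n, ‖x ((σ j : ℕ))‖ ^ pr = ∑ j : Fin n, ‖x ((j : ℕ))‖ ^ pr :=
      Equiv.sum_comp σ (fun j : Fin n => ‖x ((j : ℕ))‖ ^ pr)
    rw [h1, Fin.sum_univ_eq_sum_range (fun j => ‖x j‖ ^ pr) n, lp.norm_rpow_eq_tsum hpr0]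
    exact ((lp.memℓp x).summable hpr0).sum_le_tsum _ (fun i _ => Real.rpow_nonneg (norm_nonneg _) _)
  -- Hölder bound
  have hHold : ∀ (σ : Equiv.Perm (Fin n)) (x : lp (fun _ : ℕ => ℂ) p),
      ‖evalCLM p a σ x‖ ≤ C * ‖x‖ := by
    intro σ x
    rw [evalCLM_apply]
    have step1 : ‖∑ j : Fin n, a j * x ((σ j : ℕ))‖ ≤ ∑ j : Fin n, ‖a j‖ * ‖x ((σ j : ℕ))‖ := by
      refine le_trans (norm_sum_le _ _) ?_
      refine Finset.sum_le_sum fun j _ => ?_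
      rw [norm_mul]
    refine le_trans step1 ?_
    rcases eq_or_lt_of_le hpr1 with hpr_eq | hpr_gt
    · -- p = 1
      have hC1 : C = 1 := by
        rw [hCdef, ← hpr_eq]
        norm_num
      rw [hC1, one_mul]
      calc ∑ j : Fin n, ‖a j‖ * ‖x ((σ j : ℕ))‖ ≤ ∑ j : Fin n, ‖x ((σ j : ℕ))‖ := by
            refine Finset.sum_le_sum fun j _ => ?_
            have := ha_le_one hpr_eq.symm j
            nlinarith [norm_nonneg (x ((σ j : ℕ))), norm_nonneg (a j)]
      _ = ∑ j : Fin n, ‖x ((σ j : ℕ))‖ ^ pr := by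
            refine Finset.sum_congr rfl fun j _ => ?_
            rw [← hpr_eq, Real.rpow_one]
      _ ≤ ‖x‖ ^ pr := hxsum σ x
      _ = ‖x‖ := by rw [← hpr_eq, Real.rpow_one]
    · -- p > 1
      set q : ℝ := pr / (pr - 1) with hqdef
      have hpq : Real.HolderConjugate pr q := Real.HolderConjugate.conjExponent hpr_gt
      have hpq' : Real.HolderConjugate q pr := hpq.symm
      have hHolder := Real.inner_le_Lp_mul_Lq_of_nonneg Finset.univ
        (f := fun j : Fin n => ‖a j‖) (g := fun j : Fin n => ‖x ((σ j : ℕ))‖) hpq'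
        (fun j _ => norm_nonneg _) (fun j _ => norm_nonneg _)
      have haq : ∑ j : Fin n, ‖a j‖ ^ q = T := by
        rw [hTdef]
        refine Finset.sum_congr rfl fun j _ => ?_
        rw [hanorm hpr_gt j, ← Real.rpow_mul (norm_nonneg _)]
        congr 1
        rw [hqdef]
        field_simp
      have hxpart : (∑ j : Fin n, ‖x ((σ j : ℕ))‖ ^ pr) ^ (1/pr) ≤ ‖x‖ := by
        have h2 : ((‖x‖ ^ pr) ^ (1/pr) : ℝ) = ‖x‖ := by
          rw [← Real.rpow_mul (norm_nonneg x), mul_one_div, div_self hpr0.ne', Real.rpow_one]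
        rw [← h2]
        exact Real.rpow_le_rpow
          (Finset.sum_nonneg fun j _ => Real.rpow_nonneg (norm_nonneg _) _)
          (hxsum σ x) (by positivity)
      calc ∑ j : Fin n, ‖a j‖ * ‖x ((σ j : ℕ))‖
          ≤ (∑ j : Fin n, ‖a j‖ ^ q) ^ (1/q) * (∑ j : Fin n, ‖x ((σ j : ℕ))‖ ^ pr) ^ (1/pr) :=
            hHolder
      _ ≤ C * ‖x‖ := by
          rw [haq]
          have hCq : T ^ (1/q) = C := by
            rw [hCdef]
            congr 1
            rw [one_div, ← hpq.one_sub_inv, one_div]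
          rw [hCq]
          exact mul_le_mul_of_nonneg_left hxpart hC0
  -- value of the identity functional at z
  have hc1 : evalCLM p a 1 z = ((T : ℝ) : ℂ) := by
    rw [evalCLM_apply, hTdef]
    rw [Complex.ofReal_sum]
    refine Finset.sum_congr rfl fun j _ => ?_
    rw [Equiv.Perm.coe_one, id_eq, haz j]
  -- block-preserving permutations of Fin n
  set BP : Equiv.Perm (Fin n) → Prop := fun σ =>
    ∀ (k : ℕ) (j : Fin n), nseq k ≤ (j : ℕ) → (j : ℕ) < nseq (k + 1) →
      nseq k ≤ ((σ j) : ℕ) ∧ ((σ j) : ℕ) < nseq (k + 1) with hBPdef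
  have hBP_one : BP 1 := by
    intro k j h1 h2
    simpa using ⟨h1, h2⟩
  have hBP_mul : ∀ {σ τ' : Equiv.Perm (Fin n)}, BP σ → BP τ' → BP (σ * τ') := by
    intro σ τ' hσ hτ' k j h1 h2
    have h3 := hτ' k j h1 h2
    have h4 := hσ k (τ' j) h3.1 h3.2
    simpa [Equiv.Perm.mul_apply] using h4
  have hBP_inv : ∀ {σ : Equiv.Perm (Fin n)}, BP σ → BP σ⁻¹ := by
    intro σ hσ k j h1 h2
    obtain ⟨k', hk'1, hk'2⟩ := exists_block hmono h0 ((σ⁻¹ j) : ℕ)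
    have h3 := hσ k' (σ⁻¹ j) hk'1 hk'2
    rw [← Equiv.Perm.mul_apply, mul_inv_cancel, Equiv.Perm.one_apply] at h3
    have hkk : k' = k := block_unique hmono h3.1 h3.2 h1 h2
    subst hkk
    exact ⟨hk'1, hk'2⟩
  set G := {σ : Equiv.Perm (Fin n) // BP σ} with hGdef
  haveI : Fintype G := Fintype.ofFinite G
  haveI : Nonempty G := ⟨⟨1, hBP_one⟩⟩
  obtain ⟨M, hM1, hMbig⟩ := lemB (fun σ : G => evalCLM p a σ.1 z) C hC0 ⟨1, hBP_one⟩
    (by show C < ‖evalCLM p a (1 : Equiv.Perm (Fin n)) z‖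
        rw [hc1, Complex.norm_real, Real.norm_of_nonneg hT0.le]; exact hCT) 1
  refine ⟨M, fun x => ∑ σ : G, (evalCLM p a σ.1 x) ^ M, ?_, ?_, ?_⟩
  · -- homogeneity
    refine ⟨∑ σ : G, (ContinuousMultilinearMap.mkPiAlgebraFin ℂ M ℂ).compContinuousLinearMap
        (fun _ => evalCLM p a σ.1), fun x => ?_⟩
    rw [ContinuousMultilinearMap.sum_apply]
    refine Finset.sum_congr rfl fun σ _ => ?_
    rw [ContinuousMultilinearMap.compContinuousLinearMap_apply,
      ContinuousMultilinearMap.mkPiAlgebraFin_apply]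
    rw [List.ofFn_const, List.prod_replicate]
  · -- invariance
    intro τ hτ x x' hx'
    have hτn : ∀ j : ℕ, j < n → τ j < n := by
      intro j hj
      obtain ⟨k, hk1, hk2⟩ := exists_block hmono h0 j
      have hkn : k + 1 ≤ n₀ := by
        by_contra hc
        push_neg at hc
        have : nseq n₀ ≤ nseq k := hmono.monotone (by omega)
        omega
      have h5 := (hτ k j hk1 hk2).2
      calc τ j < nseq (k + 1) := h5
      _ ≤ nseq n₀ := hmono.monotone hkn
    have hfinj : Function.Injective (fun j : Fin n => (⟨τ (j : ℕ), hτn _ j.2⟩ : Fin n)) := by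
      intro i j hij
      have h6 := congrArg (Fin.val) hij
      simp only at h6
      exact Fin.ext (τ.injective h6)
    set τ'' : Equiv.Perm (Fin n) :=
      Equiv.ofBijective _ (Finite.injective_iff_bijective.1 hfinj) with hτ''def
    have hτ''val : ∀ j : Fin n, ((τ'' j) : ℕ) = τ (j : ℕ) := fun j => rfl
    have hτ''BP : BP τ'' := by
      intro k j h1 h2
      exact hτ k (j : ℕ) h1 h2
    have hstep : ∀ σ : Equiv.Perm (Fin n), evalCLM p a σ x' = evalCLM p a (τ'' * σ) x := by
      intro σ
      rw [evalCLM_apply, evalCLM_apply]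
      refine Finset.sum_congr rfl fun j _ => ?_
      congr 1
      rw [hx' ((σ j : ℕ))]
      congr 1
    let e : G ≃ G := {
      toFun := fun σ => ⟨τ'' * σ.1, hBP_mul hτ''BP σ.2⟩
      invFun := fun σ => ⟨τ''⁻¹ * σ.1, hBP_mul (hBP_inv hτ''BP) σ.2⟩
      left_inv := fun σ => Subtype.ext (inv_mul_cancel_left τ'' σ.1)
      right_inv := fun σ => Subtype.ext (mul_inv_cancel_left τ'' σ.1) }
    exact Fintype.sum_equiv e (fun σ : G => (evalCLM p a σ.1 x') ^ M)
      (fun σ : G => (evalCLM p a σ.1 x) ^ M)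
      (fun σ => by
        show (evalCLM p a σ.1 x') ^ M = (evalCLM p a (τ'' * σ.1) x) ^ M
        rw [hstep σ.1])
  · -- the bound
    refine ⟨(Fintype.card G : ℝ) * C ^ M, hMbig, ?_⟩
    intro x hx
    calc ‖∑ σ : G, (evalCLM p a σ.1 x) ^ M‖ ≤ ∑ σ : G, ‖(evalCLM p a σ.1 x) ^ M‖ :=
        norm_sum_le _ _
    _ ≤ ∑ _σ : G, C ^ M := by
        refine Finset.sum_le_sum fun σ _ => ?_
        rw [norm_pow]
        refine pow_le_pow_left₀ (norm_nonneg _) ?_ M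
        calc ‖evalCLM p a σ.1 x‖ ≤ C * ‖x‖ := hHold σ.1 x
        _ ≤ C * 1 := mul_le_mul_of_nonneg_left hx hC0
        _ = C := mul_one C
    _ = (Fintype.card G : ℝ) * C ^ M := by
        rw [Finset.sum_const, nsmul_eq_mul, Finset.card_univ]
end

section
/- Let P be a continuous polynomial on ℓ^∞ (bounded complex sequences with the sup norm) such that P(x + y) = P(x) for every x ∈ ℓ^∞ and every y ∈ c₀. If z = (z_j)_{j≥1} ∈ ℓ^∞ satisfies limsup_{j→∞} |z_j| ≤ 1, then |P(z)| ≤ sup_{‖x‖_∞ ≤ 1} |P(x)|; that is, z cannot be separated from the closed unit ball of ℓ^∞ by any such c₀-translation-invariant continuous polynomial. -/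
open scoped ENNReal

set_option maxHeartbeats 1000000

/-- Let `P` be a continuous polynomial on `ℓ^∞` with `P(x + y) = P(x)` for
every `x ∈ ℓ^∞` and `y ∈ c₀`. If `z ∈ ℓ^∞` has `limsup_j |z_j| ≤ 1`, then
`|P(z)| ≤ sup_{‖x‖ ≤ 1} |P(x)|`: `z` cannot be separated from the closed unit ball of `ℓ^∞`
by any such `c₀`-translation-invariant continuous polynomial. -/
theorem statement15 (P : lp (fun _ : ℕ => ℂ) ∞ → ℂ) (hP : IsContinuousPolynomial P)
    (hPinv : ∀ x y : lp (fun _ : ℕ => ℂ) ∞,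
      Filter.Tendsto (fun j : ℕ => y j) Filter.atTop (nhds 0) → P (x + y) = P x)
    (z : lp (fun _ : ℕ => ℂ) ∞)
    (hz : Filter.limsup (fun j : ℕ => ‖z j‖) Filter.atTop ≤ 1) :
    ∀ c : ℝ, (∀ x : lp (fun _ : ℕ => ℂ) ∞, ‖x‖ ≤ 1 → ‖P x‖ ≤ c) → ‖P z‖ ≤ c := by
  intro c hc
  obtain ⟨n, a₀, A, hA⟩ := hP
  set R : ℝ := ‖z‖ + 1 with hRdef
  have hR0 : (0:ℝ) < R := by have := norm_nonneg z; simp only [hRdef]; linarith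
  have hzR : ‖z‖ ≤ R := by simp only [hRdef]; linarith
  set L : ℝ := ∑ k : Fin n, ‖A k‖ * (k.1 + 1) * R ^ k.1 with hLdef
  have hL0 : (0:ℝ) ≤ L := Finset.sum_nonneg fun k _ => by positivity
  -- Lipschitz estimate on the ball of radius R
  have key : ∀ x y : lp (fun _ : ℕ => ℂ) ∞, ‖x‖ ≤ R → ‖y‖ ≤ R →
      ‖P x - P y‖ ≤ L * ‖x - y‖ := by
    intro x y hx hy
    rw [hA, hA, add_sub_add_left_eq_sub, ← Finset.sum_sub_distrib]
    calc ‖∑ k : Fin n, (A k (fun _ => x) - A k (fun _ => y))‖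
        ≤ ∑ k : Fin n, ‖A k (fun _ => x) - A k (fun _ => y)‖ := norm_sum_le _ _
      _ ≤ ∑ k : Fin n, ‖A k‖ * (k.1 + 1) * R ^ k.1 * ‖x - y‖ := by
          refine Finset.sum_le_sum fun k _ => ?_
          have h := (A k).norm_image_sub_le (fun _ => x) (fun _ => y)
          have hsub : (fun _ : Fin (k.1 + 1) => x) - (fun _ => y) = fun _ => x - y := rfl
          rw [hsub] at h
          simp only [pi_norm_const, Fintype.card_fin, Nat.add_sub_cancel] at h
          refine h.trans ?_
          have hmax : max ‖x‖ ‖y‖ ≤ R := max_le hx hy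
          push_cast
          gcongr
      _ = L * ‖x - y‖ := by rw [hLdef, Finset.sum_mul]
  haveI : Fact ((1:ℝ≥0∞) ≤ ∞) := ⟨le_top⟩
  have main : ∀ δ : ℝ, 0 < δ → ‖P z‖ ≤ c + δ := by
    intro δ hδ
    set ε : ℝ := min 1 (δ / (L * R + 1)) with hεdef
    have hε0 : 0 < ε := lt_min one_pos (by positivity)
    have hbd : Filter.IsBoundedUnder (· ≥ ·) Filter.atTop (fun j : ℕ => ‖z j‖) :=
      Filter.isBoundedUnder_of ⟨0, fun j => norm_nonneg _⟩
    have hbd' : Filter.IsBoundedUnder (· ≤ ·) Filter.atTop (fun j : ℕ => ‖z j‖) :=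
      Filter.isBoundedUnder_of ⟨‖z‖, fun j => lp.norm_apply_le_norm (by norm_num) z j⟩
    have hev : ∀ᶠ j in Filter.atTop, ‖z j‖ < 1 + ε :=
      Filter.eventually_lt_of_limsup_lt (lt_of_le_of_lt hz (by linarith)) hbd'
    obtain ⟨N, hN⟩ := Filter.eventually_atTop.1 hev
    have hfmem : Memℓp (fun j : ℕ => if j < N then z j else 0) ∞ := by
      apply memℓp_infty
      refine ⟨‖z‖, ?_⟩
      rintro r ⟨j, rfl⟩
      dsimp only
      split
      · exact lp.norm_apply_le_norm (by norm_num) z j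
      · simp only [norm_zero]; exact norm_nonneg z
    set y : lp (fun _ : ℕ => ℂ) ∞ := ⟨_, hfmem⟩ with hydef
    have hyapp : ∀ j : ℕ, y j = if j < N then z j else 0 := fun j => rfl
    set w : lp (fun _ : ℕ => ℂ) ∞ := z - y with hwdef
    have hwapp : ∀ j : ℕ, w j = if j < N then 0 else z j := by
      intro j
      have h1 : w j = z j - y j := by
        rw [hwdef]
        exact congrFun (lp.coeFn_sub z y) j
      rw [h1, hyapp]
      split <;> simp
    have hy0 : Filter.Tendsto (fun j : ℕ => y j) Filter.atTop (nhds 0) := by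
      have heq : (fun j : ℕ => y j) =ᶠ[Filter.atTop] (fun _ => (0:ℂ)) := by
        filter_upwards [Filter.eventually_ge_atTop N] with j hj
        show (if j < N then z j else 0) = 0
        exact if_neg (not_lt.2 hj)
      rw [Filter.tendsto_congr' heq]
      exact tendsto_const_nhds
    have hPz : P z = P w := by
      have h2 := hPinv w y hy0
      rwa [show w + y = z by rw [hwdef]; abel] at h2
    have h1ε : (0:ℝ) < 1 + ε := by linarith
    have hw1 : ‖w‖ ≤ 1 + ε := by
      apply lp.norm_le_of_forall_le (by linarith)
      intro j
      rw [hwapp]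
      split
      · simp; linarith
      · exact (hN j (not_lt.1 ‹_›)).le
    have hwR : ‖w‖ ≤ R := by
      apply lp.norm_le_of_forall_le hR0.le
      intro j
      rw [hwapp]
      split
      · simpa using hR0.le
      · exact (lp.norm_apply_le_norm (by norm_num) z j).trans hzR
    set v : lp (fun _ : ℕ => ℂ) ∞ := (((1 + ε : ℝ) : ℂ))⁻¹ • w with hvdef
    have hv1 : ‖v‖ ≤ 1 := by
      rw [hvdef, norm_smul, norm_inv, Complex.norm_real, Real.norm_eq_abs,
        abs_of_pos h1ε, inv_mul_le_iff₀ h1ε]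
      linarith
    have hvR : ‖v‖ ≤ R := by
      rw [hvdef, norm_smul, norm_inv, Complex.norm_real, Real.norm_eq_abs,
        abs_of_pos h1ε]
      have h3 := mul_le_mul (inv_le_one_of_one_le₀ (by linarith : (1:ℝ) ≤ 1 + ε)) hwR
        (norm_nonneg w) zero_le_one
      exact h3.trans_eq (one_mul R)
    have hwv : ‖w - v‖ ≤ ε * R := by
      have h4 : w - v = ((1 : ℂ) - (((1 + ε : ℝ) : ℂ))⁻¹) • w := by
        rw [hvdef, sub_smul, one_smul]
      have h5 : (1 : ℂ) - (((1 + ε : ℝ) : ℂ))⁻¹ = ((ε / (1 + ε) : ℝ) : ℂ) := by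
        have hne : (1 + (ε : ℂ)) ≠ 0 := by
          have := h1ε.ne'
          exact_mod_cast this
        push_cast
        field_simp
        ring
      rw [h4, h5, norm_smul, Complex.norm_real, Real.norm_eq_abs,
        abs_of_nonneg (by positivity)]
      have h6 : ε / (1 + ε) ≤ ε := by rw [div_le_iff₀ h1ε]; nlinarith
      exact mul_le_mul h6 hwR (norm_nonneg w) hε0.le
    have hεδ : ε * (L * R + 1) ≤ δ := by
      have h7 : ε ≤ δ / (L * R + 1) := min_le_right _ _
      rwa [le_div_iff₀ (by positivity)] at h7
    calc ‖P z‖ = ‖P w‖ := by rw [hPz]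
      _ ≤ ‖P v‖ + ‖P w - P v‖ := by
          have h8 := norm_add_le (P v) (P w - P v)
          simpa using h8
      _ ≤ c + L * ‖w - v‖ := add_le_add (hc v hv1) (key w v hwR hvR)
      _ ≤ c + δ := by
          have h9 : L * ‖w - v‖ ≤ L * (ε * R) := by gcongr
          nlinarith [h9, hεδ, hL0, hε0.le, hR0.le]
  exact le_of_forall_pos_le_add main
end
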